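/- arXiv:1411.0594 — 4 statements merged into one kernel-verified Lean document; each statement's English description precedes it below -/
import Mathlib

section
/- Let x₂ be a real random variable taking finitely many values with probability mass function p₂, let snr, h₁₁, h₁₂, P₂ be positive reals, and for P₁ ≥ 0 set σ²(P₁) = h₁₁²·P₁ + 1 and y = √snr·h₁₂·√P₂·x₂ + σ(P₁)·n, with n a standard real Gaussian independent of x₂. Define p_{y|x₂}(y|x₂) = (1/σ(P₁))·φ((y − √snr·h₁₂·√P₂·x₂)/σ(P₁)) with φ the standard normal density, p_y(y) = Σ_{x₂} p₂(x₂)·p_{y|x₂}(y|x₂), I(P₁) = ∫ Σ_{x₂} p₂(x₂)·p_{y|x₂}(y|x₂)·log(p_{y|x₂}(y|x₂)/p_y(y)) dy, and E₂₂(P₁) = E[(x₂ − E[x₂|y])²] with E[x₂|y] = Σ_{x₂} x₂·p₂(x₂)·p_{y|x₂}(y|x₂)/p_y(y). Then I is differentiable in P₁ and dI/dP₁ = −(snr·h₁₁²·h₁₂²·P₂)/(2·(h₁₁²·P₁ + 1)²)·E₂₂(P₁). -/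
set_option linter.unusedSectionVars false
set_option linter.unusedVariables false
set_option maxHeartbeats 1000000

open MeasureTheory Finset Real Filter


noncomputable def gg (s x : ℝ) : ℝ := (Real.sqrt (2*Real.pi*s))⁻¹ * Real.exp (-x^2/(2*s))
noncomputable def ggy (s x : ℝ) : ℝ := -(x/s) * gg s x
noncomputable def ggyy (s x : ℝ) : ℝ := (x^2/s^2 - 1/s) * gg s x

lemma gg_pos {s : ℝ} (hs : 0 < s) (x : ℝ) : 0 < gg s x := by
  unfold gg
  positivity

lemma log_gg {s : ℝ} (hs : 0 < s) (x : ℝ) :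
    Real.log (gg s x) = -(Real.log (2*Real.pi*s))/2 - x^2/(2*s) := by
  unfold gg
  rw [Real.log_mul (by positivity) (Real.exp_ne_zero _), Real.log_inv, Real.log_exp,
    Real.log_sqrt (by positivity)]
  ring

/-- derivative of gaussian in the space variable -/
lemma hasDerivAt_gg_x {s : ℝ} (hs : 0 < s) (x : ℝ) :
    HasDerivAt (fun x => gg s x) (ggy s x) x := by
  have h1 : HasDerivAt (fun x : ℝ => -x^2/(2*s)) (-(x/s)) x := by
    have := ((hasDerivAt_pow 2 x).neg).div_const (2*s)
    refine this.congr_deriv (Eq.symm ?_)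
    field_simp
    ring
  have := (h1.exp).const_mul (Real.sqrt (2*Real.pi*s))⁻¹
  refine this.congr_deriv (Eq.symm ?_)
  unfold ggy gg
  ring

lemma hasDerivAt_ggy_x {s : ℝ} (hs : 0 < s) (x : ℝ) :
    HasDerivAt (fun x => ggy s x) (ggyy s x) x := by
  have h1 : HasDerivAt (fun x : ℝ => -(x/s)) (-(1/s)) x := (hasDerivAt_id x).div_const s |>.neg
  have := h1.mul (hasDerivAt_gg_x hs x)
  refine this.congr_deriv (Eq.symm ?_)
  unfold ggyy ggy
  field_simp
  ring

/-- heat equation: derivative of gaussian in the variance variable -/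
lemma hasDerivAt_gg_s {s : ℝ} (hs : 0 < s) (x : ℝ) :
    HasDerivAt (fun s => gg s x) ((1/2) * ggyy s x) s := by
  have h2πs : (0:ℝ) < 2*Real.pi*s := by positivity
  have hsqrt : HasDerivAt (fun s : ℝ => Real.sqrt (2*Real.pi*s)) ((2*Real.pi)/(2*Real.sqrt (2*Real.pi*s))) s := by
    have hlin : HasDerivAt (fun s : ℝ => 2*Real.pi*s) (2*Real.pi) s := by
      simpa using (hasDerivAt_id s).const_mul (2*Real.pi)
    have := (Real.hasDerivAt_sqrt (ne_of_gt h2πs)).comp s hlin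
    refine this.congr_deriv (Eq.symm ?_)
    field_simp
  have hinv : HasDerivAt (fun s : ℝ => (Real.sqrt (2*Real.pi*s))⁻¹)
      (-((2*Real.pi)/(2*Real.sqrt (2*Real.pi*s))) / (Real.sqrt (2*Real.pi*s))^2) s := hsqrt.inv (by positivity)
  have hexparg : HasDerivAt (fun s : ℝ => -x^2/(2*s)) (x^2/(2*s^2)) s := by
    have h := ((hasDerivAt_id s).const_mul (2:ℝ)).inv (by positivity : (2:ℝ)*s ≠ 0)
    have h2 := h.const_mul (-x^2)
    have heq : (fun y : ℝ => -x^2 * (fun y => 2*(id y))⁻¹ y) = (fun s : ℝ => -x^2/(2*s)) := by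
      funext t; simp [div_eq_mul_inv]
    rw [heq] at h2
    refine h2.congr_deriv (Eq.symm ?_)
    simp only [id]
    field_simp
  have hexp := hexparg.exp
  have hmul := hinv.mul hexp
  refine hmul.congr_deriv (Eq.symm ?_)
  unfold ggyy gg
  set t := Real.sqrt (2*Real.pi*s) with ht
  have hpos : 0 < t := Real.sqrt_pos.mpr h2πs
  have hsq : t ^ 2 = 2*Real.pi*s := Real.sq_sqrt (le_of_lt h2πs)
  have hπ : 2*Real.pi = t^2/s := by rw [hsq]; field_simp
  rw [hπ]
  field_simp
  ring

noncomputable def Eb (sp y : ℝ) : ℝ := Real.exp (-(y^2/(4*sp)))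
noncomputable def Kc (sm c : ℝ) : ℝ := (Real.sqrt (2*Real.pi*sm))⁻¹ * Real.exp (c^2/(2*sm))
noncomputable def K2c (sm c : ℝ) : ℝ := (1+c) * Kc sm c / sm
noncomputable def K3c (sm c : ℝ) : ℝ := ((2*c^2+2)/sm^2 + 1/sm) * Kc sm c
noncomputable def K4c (sm c : ℝ) : ℝ := (2*c^2+2)/sm^2 * Kc sm c
noncomputable def Lc (sm sp c : ℝ) : ℝ :=
  |Real.log (2*Real.pi*sm)|/2 + |Real.log (2*Real.pi*sp)|/2 + (c^2+1)/sm

section PointBounds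
variable {sm sp s c μj y : ℝ}

lemma Eb_pos (hsp : 0 < sp) (y : ℝ) : 0 < Eb sp y := Real.exp_pos _
lemma Eb_le_one (hsp : 0 < sp) (y : ℝ) : Eb sp y ≤ 1 := by
  unfold Eb
  rw [show (1:ℝ) = Real.exp 0 by simp]
  apply Real.exp_le_exp.mpr
  have : 0 ≤ y^2/(4*sp) := by positivity
  linarith
lemma Kc_pos (hm : 0 < sm) (c : ℝ) : 0 < Kc sm c := by unfold Kc; positivity
lemma Lc_nonneg (hm : 0 < sm) (c : ℝ) : 0 ≤ Lc sm sp c := by unfold Lc; positivity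
lemma Z_ge_one (y : ℝ) : (1:ℝ) ≤ 1 + y^2 := by nlinarith [sq_nonneg y]

lemma musq_le (hμ : |μj| ≤ c) : μj^2 ≤ c^2 := by
  have h := abs_le.mp hμ
  nlinarith [h.1, h.2]

lemma xsq_lower (hμ : |μj| ≤ c) : y^2/2 - c^2 ≤ (y - μj)^2 := by
  have := musq_le hμ
  nlinarith [sq_nonneg (y - 2*μj)]

lemma xsq_upper (hμ : |μj| ≤ c) : (y - μj)^2 ≤ 2*y^2 + 2*c^2 := by
  have := musq_le hμ
  nlinarith [sq_nonneg (y + μj)]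

lemma exponent_le (hm : 0 < sm) (hs1 : sm ≤ s) (hs2 : s ≤ sp) (hμ : |μj| ≤ c) :
    -(y - μj)^2/(2*s) ≤ c^2/(2*sm) - y^2/(4*sp) := by
  have hs : 0 < s := lt_of_lt_of_le hm hs1
  have hsp : 0 < sp := lt_of_lt_of_le hs hs2
  have step1 : (y^2/2 - c^2)/(2*sp) ≤ (y - μj)^2/(2*s) := by
    rw [div_le_div_iff₀ (by positivity) (by positivity)]
    have h1 := xsq_lower (y := y) hμ
    nlinarith [mul_le_mul_of_nonneg_right h1 (by positivity : (0:ℝ) ≤ 2*s),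
      mul_le_mul_of_nonneg_left hs2 (by positivity : (0:ℝ) ≤ 2*(y - μj)^2)]
  rw [neg_div]
  have step2 : c^2/(2*sp) ≤ c^2/(2*sm) := by
    rw [div_le_div_iff₀ (by positivity) (by positivity)]
    nlinarith [mul_le_mul_of_nonneg_left (show sm ≤ sp by linarith) (sq_nonneg c)]
  have step3 : (y^2/2 - c^2)/(2*sp) = y^2/(4*sp) - c^2/(2*sp) := by ring
  linarith
lemma gg_le_bound (hm : 0 < sm) (hs1 : sm ≤ s) (hs2 : s ≤ sp) (hμ : |μj| ≤ c) :
    gg s (y - μj) ≤ Kc sm c * Eb sp y := by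
  have hs : 0 < s := lt_of_lt_of_le hm hs1
  unfold gg Kc Eb
  have h1 : (Real.sqrt (2*Real.pi*s))⁻¹ ≤ (Real.sqrt (2*Real.pi*sm))⁻¹ := by
    apply inv_anti₀ (by positivity)
    apply Real.sqrt_le_sqrt
    nlinarith [Real.pi_pos]
  have h2 : Real.exp (-(y - μj)^2/(2*s)) ≤ Real.exp (c^2/(2*sm) - y^2/(4*sp)) :=
    Real.exp_le_exp.mpr (exponent_le hm hs1 hs2 hμ)
  calc (Real.sqrt (2*Real.pi*s))⁻¹ * Real.exp (-(y-μj)^2/(2*s))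
      ≤ (Real.sqrt (2*Real.pi*sm))⁻¹ * Real.exp (c^2/(2*sm) - y^2/(4*sp)) := by
        apply mul_le_mul h1 h2 (le_of_lt (Real.exp_pos _)) (by positivity)
    _ = (Real.sqrt (2*Real.pi*sm))⁻¹ * Real.exp (c^2/(2*sm)) * Real.exp (-(y^2/(4*sp))) := by
        rw [sub_eq_add_neg, Real.exp_add]; ring

lemma log_gg_bound (hm : 0 < sm) (hs1 : sm ≤ s) (hs2 : s ≤ sp) (hμ : |μj| ≤ c) :
    |Real.log (gg s (y - μj))| ≤ Lc sm sp c * (1 + y^2) := by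
  have hs : 0 < s := lt_of_lt_of_le hm hs1
  have hsp : 0 < sp := lt_of_lt_of_le hs hs2
  rw [log_gg hs]
  have habs : |Real.log (2*Real.pi*s)| ≤ |Real.log (2*Real.pi*sm)| + |Real.log (2*Real.pi*sp)| := by
    have hm1 : Real.log (2*Real.pi*sm) ≤ Real.log (2*Real.pi*s) := by
      apply Real.log_le_log (by positivity)
      nlinarith [Real.pi_pos]
    have hm2 : Real.log (2*Real.pi*s) ≤ Real.log (2*Real.pi*sp) := by
      apply Real.log_le_log (by positivity)
      nlinarith [Real.pi_pos]
    calc |Real.log (2*Real.pi*s)| ≤ max |Real.log (2*Real.pi*sm)| |Real.log (2*Real.pi*sp)| :=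
        abs_le_max_abs_abs hm1 hm2
      _ ≤ _ := max_le_add_of_nonneg (abs_nonneg _) (abs_nonneg _)
  have hx2 : (y - μj)^2/(2*s) ≤ (y^2 + c^2)/sm := by
    have h1 := xsq_upper (y := y) hμ
    rw [div_le_div_iff₀ (by positivity) hm]
    nlinarith [mul_le_mul_of_nonneg_right h1 (le_of_lt hm),
      mul_le_mul_of_nonneg_left hs1 (by positivity : (0:ℝ) ≤ (y-μj)^2)]
  have htri : |(-(Real.log (2*Real.pi*s))/2 - (y - μj)^2/(2*s))|
      ≤ |Real.log (2*Real.pi*s)|/2 + (y - μj)^2/(2*s) := by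
    have h0 : (0:ℝ) ≤ (y - μj)^2/(2*s) := by positivity
    rw [abs_sub_comm]
    calc |(y - μj)^2/(2*s) - (-(Real.log (2*Real.pi*s))/2)|
        ≤ |(y - μj)^2/(2*s)| + |(-(Real.log (2*Real.pi*s))/2)| := abs_sub _ _
      _ = (y - μj)^2/(2*s) + |Real.log (2*Real.pi*s)|/2 := by
          rw [abs_of_nonneg h0, abs_div, abs_neg, abs_two]
      _ = _ := by ring
  unfold Lc
  have hc2 : (0:ℝ) ≤ c^2/sm := by positivity
  have h1s : (0:ℝ) < 1/sm := by positivity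
  calc |(-(Real.log (2*Real.pi*s))/2 - (y - μj)^2/(2*s))|
      ≤ |Real.log (2*Real.pi*s)|/2 + (y - μj)^2/(2*s) := htri
    _ ≤ (|Real.log (2*Real.pi*sm)| + |Real.log (2*Real.pi*sp)|)/2 + (y^2 + c^2)/sm := by
        linarith
    _ ≤ _ := by
        have expand : (|Real.log (2*Real.pi*sm)|/2 + |Real.log (2*Real.pi*sp)|/2 + (c^2+1)/sm)*(1+y^2)
            = (|Real.log (2*Real.pi*sm)| + |Real.log (2*Real.pi*sp)|)/2 + (y^2+c^2)/sm
              + ((|Real.log (2*Real.pi*sm)|/2 + |Real.log (2*Real.pi*sp)|/2)*y^2 + 1/sm + c^2/sm*y^2) := by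
          ring
        have h1 : 0 ≤ (|Real.log (2*Real.pi*sm)|/2 + |Real.log (2*Real.pi*sp)|/2)*y^2 := by positivity
        have h2 : (0:ℝ) ≤ 1/sm := by positivity
        have h3 : (0:ℝ) ≤ c^2/sm*y^2 := by positivity
        rw [expand]
        linarith
end PointBounds

noncomputable def LPc (sm sp c ω : ℝ) : ℝ := |Real.log (Kc sm c)| + |Real.log ω| + Lc sm sp c
noncomputable def CGy (sm sp c ω : ℝ) : ℝ :=
  (K3c sm c * (Lc sm sp c + 1) + K4c sm c) + (K3c sm c * (LPc sm sp c ω + 1) + K4c sm c)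
noncomputable def CGG (sm sp c ω : ℝ) : ℝ :=
  K2c sm c * (Lc sm sp c + 1) + K2c sm c * (LPc sm sp c ω + 1)
noncomputable def Cffn (sm sp c ω : ℝ) : ℝ := Kc sm c * (Lc sm sp c + LPc sm sp c ω)
noncomputable def CFd (sm sp c ω : ℝ) : ℝ := CGy sm sp c ω / 2 + 2*c^2*Kc sm c/sm^2

section Helpers

lemma abs_y_le (y : ℝ) : |y| ≤ 1 + y^2 := by
  nlinarith [sq_abs y, sq_nonneg (|y| - 1), abs_nonneg y]

lemma mul_log_bound {A logv KA L Z E : ℝ} (hA : |A| ≤ KA*Z*E) (hlog : |logv| ≤ L*Z)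
    (hZ : 1 ≤ Z) (hE : 0 < E) (hE1 : E ≤ 1) (hL : 0 ≤ L) :
    |A*(logv + 1)| ≤ KA*(L+1)*Z^2*E := by
  have hKA : 0 ≤ KA := by
    by_contra h
    push_neg at h
    nlinarith [abs_nonneg A, mul_pos (show (0:ℝ) < Z by linarith) hE]
  rw [abs_mul]
  have h1 : |logv + 1| ≤ L*Z + 1 := by
    calc |logv + 1| ≤ |logv| + 1 := by
          calc |logv + 1| ≤ |logv| + |1| := abs_add_le _ _
            _ = |logv| + 1 := by rw [abs_one]
      _ ≤ L*Z + 1 := by linarith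
  have h2 : L*Z + 1 ≤ (L+1)*Z := by nlinarith
  calc |A| * |logv+1| ≤ (KA*Z*E) * ((L+1)*Z) := by
        apply mul_le_mul hA (le_trans h1 h2) (abs_nonneg _) (by positivity)
    _ = KA*(L+1)*Z^2*E := by ring

lemma le_ZsqE {T K Z E : ℝ} (h : T ≤ K*Z*E) (hZ : 1 ≤ Z) (hE : 0 < E) (hK : 0 ≤ K) :
    T ≤ K*Z^2*E := by
  have h1 : 0 ≤ K*E := mul_nonneg hK hE.le
  have h2 : 0 ≤ Z*(Z-1) := by nlinarith
  nlinarith [mul_nonneg h1 h2]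

end Helpers

section PointBounds2
variable {sm sp s c μj y : ℝ}

lemma ggy_bound (hm : 0 < sm) (hs1 : sm ≤ s) (hs2 : s ≤ sp) (hμ : |μj| ≤ c) :
    |ggy s (y - μj)| ≤ K2c sm c * (1 + y^2) * Eb sp y := by
  have hs : 0 < s := lt_of_lt_of_le hm hs1
  have hc0 : 0 ≤ c := le_trans (abs_nonneg μj) hμ
  have hg := gg_pos hs (y - μj)
  have hE : 0 < Eb sp y := Real.exp_pos _
  have hK := Kc_pos hm c
  have habs : |ggy s (y - μj)| = (|y - μj|/s) * gg s (y - μj) := by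
    unfold ggy
    rw [abs_mul, abs_neg, abs_div, abs_of_pos hs, abs_of_pos hg]
  rw [habs]
  have hnum : |y - μj| ≤ |y| + c := le_trans (abs_sub _ _) (by linarith)
  have hdiv : |y - μj|/s ≤ (|y| + c)/sm :=
    div_le_div₀ (by positivity) hnum hm hs1
  calc (|y - μj|/s) * gg s (y - μj) ≤ ((|y| + c)/sm) * (Kc sm c * Eb sp y) := by
        apply mul_le_mul hdiv (gg_le_bound hm hs1 hs2 hμ) (le_of_lt hg) (by positivity)
    _ ≤ ((1+c)*(1+y^2))/sm * (Kc sm c * Eb sp y) := by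
        apply mul_le_mul_of_nonneg_right _ (by positivity)
        apply (div_le_div_iff_of_pos_right hm).mpr
        nlinarith [abs_y_le y, mul_nonneg hc0 (sq_nonneg y)]
    _ = K2c sm c * (1 + y^2) * Eb sp y := by unfold K2c; ring

lemma ggyy_bound (hm : 0 < sm) (hs1 : sm ≤ s) (hs2 : s ≤ sp) (hμ : |μj| ≤ c) :
    |ggyy s (y - μj)| ≤ K3c sm c * (1 + y^2) * Eb sp y := by
  have hs : 0 < s := lt_of_lt_of_le hm hs1
  have hc0 : 0 ≤ c := le_trans (abs_nonneg μj) hμ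
  have hg := gg_pos hs (y - μj)
  have hE : 0 < Eb sp y := Real.exp_pos _
  have hK := Kc_pos hm c
  have h1 : |ggyy s (y - μj)| ≤ ((y-μj)^2/s^2 + 1/s) * gg s (y - μj) := by
    unfold ggyy
    rw [abs_mul, abs_of_pos hg]
    apply mul_le_mul_of_nonneg_right _ (le_of_lt hg)
    calc |(y-μj)^2/s^2 - 1/s| ≤ |(y-μj)^2/s^2| + |1/s| := abs_sub _ _
      _ = (y-μj)^2/s^2 + 1/s := by
          rw [abs_of_nonneg (by positivity : (0:ℝ) ≤ (y-μj)^2/s^2),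
            abs_of_pos (by positivity : (0:ℝ) < 1/s)]
  have h2 : (y-μj)^2/s^2 + 1/s ≤ (2*c^2+2)/sm^2*(1+y^2) + 1/sm*(1+y^2) := by
    have ha : (y-μj)^2/s^2 ≤ (2*y^2+2*c^2)/sm^2 :=
      div_le_div₀ (by positivity) (xsq_upper hμ) (by positivity)
        (by nlinarith [mul_le_mul hs1 hs1 (le_of_lt hm) (le_of_lt hs)])
    have hb : 1/s ≤ 1/sm := by
      rw [div_le_div_iff₀ hs hm]; linarith
    have hc' : (2*y^2+2*c^2)/sm^2 ≤ (2*c^2+2)/sm^2*(1+y^2) := by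
      rw [div_mul_eq_mul_div, div_le_div_iff₀ (by positivity) (by positivity)]
      nlinarith [mul_nonneg (by positivity : (0:ℝ) ≤ 2+2*c^2*y^2) (sq_nonneg sm)]
    have hd : 1/sm ≤ 1/sm*(1+y^2) := by
      nlinarith [mul_nonneg (le_of_lt (show (0:ℝ) < 1/sm by positivity)) (sq_nonneg y)]
    linarith
  calc |ggyy s (y - μj)| ≤ ((y-μj)^2/s^2 + 1/s) * gg s (y - μj) := h1
    _ ≤ ((2*c^2+2)/sm^2*(1+y^2) + 1/sm*(1+y^2)) * (Kc sm c * Eb sp y) := by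
        apply mul_le_mul h2 (gg_le_bound hm hs1 hs2 hμ) (le_of_lt hg) (by positivity)
    _ = K3c sm c * (1 + y^2) * Eb sp y := by unfold K3c; ring

lemma ggysq_eq {s : ℝ} (hs : 0 < s) (x : ℝ) :
    ggy s x * (ggy s x / gg s x) = x^2/s^2 * gg s x := by
  have hg := gg_pos hs x
  unfold ggy
  field_simp

lemma ggysq_bound (hm : 0 < sm) (hs1 : sm ≤ s) (hs2 : s ≤ sp) (hμ : |μj| ≤ c) :
    ggy s (y - μj) * (ggy s (y - μj) / gg s (y - μj)) ≤ K4c sm c * (1 + y^2) * Eb sp y := by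
  have hs : 0 < s := lt_of_lt_of_le hm hs1
  have hc0 : 0 ≤ c := le_trans (abs_nonneg μj) hμ
  have hg := gg_pos hs (y - μj)
  have hK := Kc_pos hm c
  rw [ggysq_eq hs]
  have h2 : (y-μj)^2/s^2 ≤ (2*c^2+2)/sm^2*(1+y^2) := by
    have ha : (y-μj)^2/s^2 ≤ (2*y^2+2*c^2)/sm^2 :=
      div_le_div₀ (by positivity) (xsq_upper hμ) (by positivity)
        (by nlinarith [mul_le_mul hs1 hs1 (le_of_lt hm) (le_of_lt hs)])
    have hc' : (2*y^2+2*c^2)/sm^2 ≤ (2*c^2+2)/sm^2*(1+y^2) := by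
      rw [div_mul_eq_mul_div, div_le_div_iff₀ (by positivity) (by positivity)]
      nlinarith [mul_nonneg (by positivity : (0:ℝ) ≤ 2+2*c^2*y^2) (sq_nonneg sm)]
    linarith
  calc (y-μj)^2/s^2 * gg s (y - μj)
      ≤ ((2*c^2+2)/sm^2*(1+y^2)) * (Kc sm c * Eb sp y) := by
        apply mul_le_mul h2 (gg_le_bound hm hs1 hs2 hμ) (le_of_lt hg) (by positivity)
    _ = K4c sm c * (1 + y^2) * Eb sp y := by unfold K4c; ring

lemma ggysq_nonneg (hm : 0 < sm) (hs1 : sm ≤ s) (x : ℝ) :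
    0 ≤ ggy s x * (ggy s x / gg s x) := by
  have hs : 0 < s := lt_of_lt_of_le hm hs1
  rw [ggysq_eq hs]
  exact mul_nonneg (by positivity) (le_of_lt (gg_pos hs x))

end PointBounds2

section SumBounds
variable {ι : Type*} [Fintype ι] (w μ : ι → ℝ)

noncomputable def PP (s y : ℝ) : ℝ := ∑ j, w j * gg s (y - μ j)
noncomputable def QQ (s y : ℝ) : ℝ := ∑ j, w j * μ j * gg s (y - μ j)
noncomputable def PPy (s y : ℝ) : ℝ := ∑ j, w j * ggy s (y - μ j)
noncomputable def PPyy (s y : ℝ) : ℝ := ∑ j, w j * ggyy s (y - μ j)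
noncomputable def ffn (s y : ℝ) : ℝ :=
  ∑ j, w j * gg s (y - μ j) * (Real.log (gg s (y - μ j)) - Real.log (PP w μ s y))
noncomputable def mm (s y : ℝ) : ℝ :=
  ∑ j, w j * gg s (y - μ j) * (μ j - QQ w μ s y / PP w μ s y)^2
noncomputable def GG (s y : ℝ) : ℝ :=
  ∑ j, w j * (ggy s (y - μ j) * (Real.log (gg s (y - μ j)) + 1))
    - PPy w μ s y * (Real.log (PP w μ s y) + 1)
noncomputable def GGy (s y : ℝ) : ℝ :=
  ∑ j, w j * (ggyy s (y - μ j) * (Real.log (gg s (y - μ j)) + 1)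
      + ggy s (y - μ j) * (ggy s (y - μ j) / gg s (y - μ j)))
    - (PPyy w μ s y * (Real.log (PP w μ s y) + 1) + PPy w μ s y * (PPy w μ s y / PP w μ s y))
noncomputable def FFd (s y : ℝ) : ℝ := (1/2) * GGy w μ s y - 1/(2*s^2) * mm w μ s y

variable [Nonempty ι] {sm sp s c y : ℝ}

lemma PP_pos (hw : ∀ j, 0 < w j) (hs : 0 < s) (y : ℝ) : 0 < PP w μ s y :=
  Finset.sum_pos (fun j _ => mul_pos (hw j) (gg_pos hs _)) univ_nonempty

omit [Nonempty ι] in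
lemma sum_weighted_le (hw : ∀ j, 0 < w j) (hw1 : ∑ j, w j = 1) {T : ι → ℝ} {B : ℝ}
    (h : ∀ j, |T j| ≤ B) : |∑ j, w j * T j| ≤ B := by
  calc |∑ j, w j * T j| ≤ ∑ j, |w j * T j| := Finset.abs_sum_le_sum_abs _ _
    _ = ∑ j, w j * |T j| := by
        refine Finset.sum_congr rfl fun j _ => ?_
        rw [abs_mul, abs_of_pos (hw j)]
    _ ≤ ∑ j, w j * B := Finset.sum_le_sum fun j _ =>
        mul_le_mul_of_nonneg_left (h j) (hw j).le
    _ = B := by rw [← Finset.sum_mul, hw1, one_mul]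

lemma PP_le (hw : ∀ j, 0 < w j) (hw1 : ∑ j, w j = 1) (hμ : ∀ j, |μ j| ≤ c)
    (hm : 0 < sm) (hs1 : sm ≤ s) (hs2 : s ≤ sp) :
    PP w μ s y ≤ Kc sm c * Eb sp y := by
  have hs : 0 < s := lt_of_lt_of_le hm hs1
  refine le_trans (le_abs_self _) (sum_weighted_le w hw hw1 fun j => ?_)
  rw [abs_of_pos (gg_pos hs _)]
  exact gg_le_bound hm hs1 hs2 (hμ j)

lemma absPPy_le (hw : ∀ j, 0 < w j) (hw1 : ∑ j, w j = 1) (hμ : ∀ j, |μ j| ≤ c)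
    (hm : 0 < sm) (hs1 : sm ≤ s) (hs2 : s ≤ sp) :
    |PPy w μ s y| ≤ K2c sm c * (1 + y^2) * Eb sp y :=
  sum_weighted_le w hw hw1 fun j => ggy_bound hm hs1 hs2 (hμ j)

lemma absPPyy_le (hw : ∀ j, 0 < w j) (hw1 : ∑ j, w j = 1) (hμ : ∀ j, |μ j| ≤ c)
    (hm : 0 < sm) (hs1 : sm ≤ s) (hs2 : s ≤ sp) :
    |PPyy w μ s y| ≤ K3c sm c * (1 + y^2) * Eb sp y :=
  sum_weighted_le w hw hw1 fun j => ggyy_bound hm hs1 hs2 (hμ j)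

lemma logPP_bound (hw : ∀ j, 0 < w j) (hw1 : ∑ j, w j = 1) (hμ : ∀ j, |μ j| ≤ c)
    (hm : 0 < sm) (hs1 : sm ≤ s) (hs2 : s ≤ sp) (j₀ : ι) :
    |Real.log (PP w μ s y)| ≤ LPc sm sp c (w j₀) * (1 + y^2) := by
  have hs : 0 < s := lt_of_lt_of_le hm hs1
  have hP := PP_pos w μ hw hs y
  have hK := Kc_pos hm c
  have hZ := Z_ge_one y
  have hL := Lc_nonneg (sp := sp) hm c
  have hupper : Real.log (PP w μ s y) ≤ |Real.log (Kc sm c)| := by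
    have h1 : PP w μ s y ≤ Kc sm c := by
      refine le_trans (PP_le w μ hw hw1 hμ hm hs1 hs2) ?_
      nlinarith [Eb_le_one (lt_of_lt_of_le hs hs2) y, Eb_pos (lt_of_lt_of_le hs hs2) y]
    exact le_trans (Real.log_le_log hP h1) (le_abs_self _)
  have hlower : -|Real.log (w j₀)| - Lc sm sp c * (1 + y^2) ≤ Real.log (PP w μ s y) := by
    have h1 : w j₀ * gg s (y - μ j₀) ≤ PP w μ s y :=
      Finset.single_le_sum (f := fun j => w j * gg s (y - μ j))
        (fun j _ => (mul_pos (hw j) (gg_pos hs _)).le) (mem_univ j₀)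
    have h2 : Real.log (w j₀ * gg s (y - μ j₀)) ≤ Real.log (PP w μ s y) :=
      Real.log_le_log (mul_pos (hw j₀) (gg_pos hs _)) h1
    rw [Real.log_mul (ne_of_gt (hw j₀)) (ne_of_gt (gg_pos hs _))] at h2
    have h3 : -|Real.log (w j₀)| ≤ Real.log (w j₀) := neg_abs_le _
    have h4 : -(Lc sm sp c * (1 + y^2)) ≤ Real.log (gg s (y - μ j₀)) := by
      have := log_gg_bound (y := y) hm hs1 hs2 (hμ j₀)
      have := neg_abs_le (Real.log (gg s (y - μ j₀)))
      linarith [abs_le.mp (log_gg_bound (y := y) hm hs1 hs2 (hμ j₀))]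
    linarith
  rw [abs_le]
  constructor
  · refine le_trans ?_ hlower
    unfold LPc
    nlinarith [abs_nonneg (Real.log (Kc sm c)), abs_nonneg (Real.log (w j₀)),
      mul_nonneg (abs_nonneg (Real.log (w j₀))) (sq_nonneg y),
      mul_nonneg (abs_nonneg (Real.log (Kc sm c))) (sq_nonneg y),
      mul_nonneg hL (sq_nonneg y)]
  · refine le_trans hupper ?_
    unfold LPc
    nlinarith [abs_nonneg (Real.log (Kc sm c)), abs_nonneg (Real.log (w j₀)),
      mul_nonneg (abs_nonneg (Real.log (w j₀))) (sq_nonneg y),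
      mul_nonneg (abs_nonneg (Real.log (Kc sm c))) (sq_nonneg y),
      mul_nonneg hL (sq_nonneg y), sq_nonneg y]

lemma PPysq_nonneg (hw : ∀ j, 0 < w j) (hs : 0 < s) (y : ℝ) :
    0 ≤ PPy w μ s y * (PPy w μ s y / PP w μ s y) := by
  have hP := PP_pos w μ hw hs y
  rw [mul_div_assoc']
  exact div_nonneg (mul_self_nonneg _) hP.le

lemma PPysq_le (hw : ∀ j, 0 < w j) (hw1 : ∑ j, w j = 1) (hμ : ∀ j, |μ j| ≤ c)
    (hm : 0 < sm) (hs1 : sm ≤ s) (hs2 : s ≤ sp) :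
    PPy w μ s y * (PPy w μ s y / PP w μ s y) ≤ K4c sm c * (1 + y^2) * Eb sp y := by
  have hs : 0 < s := lt_of_lt_of_le hm hs1
  have hP := PP_pos w μ hw hs y
  have cs := Finset.sum_mul_sq_le_sq_mul_sq univ
    (fun j => Real.sqrt (w j * gg s (y - μ j)))
    (fun j => w j * ggy s (y - μ j) / Real.sqrt (w j * gg s (y - μ j)))
  have hfg : ∀ j : ι, Real.sqrt (w j * gg s (y - μ j))
      * (w j * ggy s (y - μ j) / Real.sqrt (w j * gg s (y - μ j)))
      = w j * ggy s (y - μ j) := fun j =>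
    mul_div_cancel₀ _ (ne_of_gt (Real.sqrt_pos.mpr (mul_pos (hw j) (gg_pos hs _))))
  have hf2 : ∀ j : ι, (Real.sqrt (w j * gg s (y - μ j)))^2 = w j * gg s (y - μ j) :=
    fun j => Real.sq_sqrt (mul_pos (hw j) (gg_pos hs _)).le
  have hg2 : ∀ j : ι, (w j * ggy s (y - μ j) / Real.sqrt (w j * gg s (y - μ j)))^2
      = w j * (ggy s (y - μ j) * (ggy s (y - μ j) / gg s (y - μ j))) := by
    intro j
    rw [div_pow, hf2 j]
    have hwj := hw j
    have hgj := gg_pos hs (y - μ j)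
    field_simp
  rw [Finset.sum_congr rfl fun j _ => hfg j] at cs
  rw [Finset.sum_congr rfl fun j _ => hf2 j, Finset.sum_congr rfl fun j _ => hg2 j] at cs
  have hS : ∑ j, w j * (ggy s (y - μ j) * (ggy s (y - μ j) / gg s (y - μ j)))
      ≤ K4c sm c * (1 + y^2) * Eb sp y := by
    have h := sum_weighted_le w hw hw1
      (T := fun j => ggy s (y - μ j) * (ggy s (y - μ j) / gg s (y - μ j)))
      (B := K4c sm c * (1 + y^2) * Eb sp y) fun j => by
        rw [abs_of_nonneg (ggysq_nonneg hm hs1 _)]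
        exact ggysq_bound hm hs1 hs2 (hμ j)
    exact le_trans (le_abs_self _) h
  have key : PPy w μ s y * (PPy w μ s y / PP w μ s y)
      ≤ ∑ j, w j * (ggy s (y - μ j) * (ggy s (y - μ j) / gg s (y - μ j))) := by
    rw [mul_div_assoc', div_le_iff₀ hP]
    calc PPy w μ s y * PPy w μ s y = (PPy w μ s y)^2 := by ring
      _ ≤ PP w μ s y * ∑ j, w j * (ggy s (y - μ j) * (ggy s (y - μ j) / gg s (y - μ j))) := cs
      _ = (∑ j, w j * (ggy s (y - μ j) * (ggy s (y - μ j) / gg s (y - μ j)))) * PP w μ s y := by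
          ring
  exact le_trans key hS

lemma mm_nonneg (hw : ∀ j, 0 < w j) (hs : 0 < s) (y : ℝ) : 0 ≤ mm w μ s y :=
  Finset.sum_nonneg fun j _ =>
    mul_nonneg (mul_nonneg (hw j).le (gg_pos hs _).le) (sq_nonneg _)

lemma mm_le (hw : ∀ j, 0 < w j) (hw1 : ∑ j, w j = 1) (hμ : ∀ j, |μ j| ≤ c)
    (hm : 0 < sm) (hs1 : sm ≤ s) (hs2 : s ≤ sp) :
    mm w μ s y ≤ 4*c^2 * Kc sm c * Eb sp y := by
  have hs : 0 < s := lt_of_lt_of_le hm hs1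
  have hP := PP_pos w μ hw hs y
  have hc0 : 0 ≤ c := le_trans (abs_nonneg (μ (Classical.arbitrary ι))) (hμ _)
  have hQ : |QQ w μ s y| ≤ c * PP w μ s y := by
    calc |QQ w μ s y| ≤ ∑ j, |w j * μ j * gg s (y - μ j)| := Finset.abs_sum_le_sum_abs _ _
      _ ≤ ∑ j, c * (w j * gg s (y - μ j)) := by
          refine Finset.sum_le_sum fun j _ => ?_
          rw [abs_mul, abs_mul, abs_of_pos (hw j), abs_of_pos (gg_pos hs _)]
          calc w j * |μ j| * gg s (y - μ j) ≤ w j * c * gg s (y - μ j) := by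
                apply mul_le_mul_of_nonneg_right _ (gg_pos hs _).le
                exact mul_le_mul_of_nonneg_left (hμ j) (hw j).le
            _ = c * (w j * gg s (y - μ j)) := by ring
      _ = c * PP w μ s y := by rw [← Finset.mul_sum]; rfl
  have hsq : ∀ j : ι, (μ j - QQ w μ s y / PP w μ s y)^2 ≤ 4*c^2 := by
    intro j
    have h1 : |QQ w μ s y / PP w μ s y| ≤ c := by
      rw [abs_div, abs_of_pos hP, div_le_iff₀ hP]
      linarith [hQ]
    have h2 : |μ j - QQ w μ s y / PP w μ s y| ≤ 2*c := by
      calc |μ j - QQ w μ s y / PP w μ s y| ≤ |μ j| + |QQ w μ s y / PP w μ s y| := abs_sub _ _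
        _ ≤ 2*c := by linarith [hμ j]
    nlinarith [abs_nonneg (μ j - QQ w μ s y / PP w μ s y),
      sq_abs (μ j - QQ w μ s y / PP w μ s y)]
  calc mm w μ s y ≤ ∑ j, w j * gg s (y - μ j) * (4*c^2) := by
        refine Finset.sum_le_sum fun j _ => ?_
        exact mul_le_mul_of_nonneg_left (hsq j) (mul_pos (hw j) (gg_pos hs _)).le
    _ = 4*c^2 * PP w μ s y := by rw [← Finset.sum_mul]; unfold PP; ring
    _ ≤ 4*c^2 * Kc sm c * Eb sp y := by
        have := PP_le (y := y) w μ hw hw1 hμ hm hs1 hs2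
        nlinarith [sq_nonneg c, Eb_pos (lt_of_lt_of_le hs hs2) y]

end SumBounds

section MasterBounds
variable {ι : Type*} [Fintype ι] (w μ : ι → ℝ) [Nonempty ι] {sm sp s c y : ℝ}

lemma absGGy_le (hw : ∀ j, 0 < w j) (hw1 : ∑ j, w j = 1) (hμ : ∀ j, |μ j| ≤ c)
    (hm : 0 < sm) (hs1 : sm ≤ s) (hs2 : s ≤ sp) (j₀ : ι) :
    |GGy w μ s y| ≤ CGy sm sp c (w j₀) * (1 + y^2)^2 * Eb sp y := by
  have hs : 0 < s := lt_of_lt_of_le hm hs1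
  have hsp : 0 < sp := lt_of_lt_of_le hs hs2
  have hE := Eb_pos hsp y
  have hE1 := Eb_le_one hsp y
  have hZ := Z_ge_one y
  have hL := Lc_nonneg (sp := sp) hm c
  have hLP : 0 ≤ LPc sm sp c (w j₀) := by
    unfold LPc; positivity
  have hK4 : 0 ≤ K4c sm c :=
    le_of_lt (mul_pos (by positivity) (Kc_pos hm c))
  have hS : |∑ j, w j * (ggyy s (y - μ j) * (Real.log (gg s (y - μ j)) + 1)
      + ggy s (y - μ j) * (ggy s (y - μ j) / gg s (y - μ j)))|
      ≤ (K3c sm c * (Lc sm sp c + 1) + K4c sm c) * (1 + y^2)^2 * Eb sp y := by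
    refine sum_weighted_le w hw hw1 fun j => ?_
    calc |ggyy s (y - μ j) * (Real.log (gg s (y - μ j)) + 1)
          + ggy s (y - μ j) * (ggy s (y - μ j) / gg s (y - μ j))|
        ≤ |ggyy s (y - μ j) * (Real.log (gg s (y - μ j)) + 1)|
          + |ggy s (y - μ j) * (ggy s (y - μ j) / gg s (y - μ j))| := abs_add_le _ _
      _ ≤ K3c sm c * (Lc sm sp c + 1) * (1 + y^2)^2 * Eb sp y
          + K4c sm c * (1 + y^2)^2 * Eb sp y := by
          have h1 := mul_log_bound (ggyy_bound (y := y) hm hs1 hs2 (hμ j))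
            (log_gg_bound (y := y) hm hs1 hs2 (hμ j)) hZ hE hE1 hL
          have h2 : |ggy s (y - μ j) * (ggy s (y - μ j) / gg s (y - μ j))|
              ≤ K4c sm c * (1 + y^2)^2 * Eb sp y := by
            rw [abs_of_nonneg (ggysq_nonneg hm hs1 _)]
            exact le_ZsqE (ggysq_bound hm hs1 hs2 (hμ j)) hZ hE hK4
          linarith
      _ = (K3c sm c * (Lc sm sp c + 1) + K4c sm c) * (1 + y^2)^2 * Eb sp y := by ring
  have hU : |PPyy w μ s y * (Real.log (PP w μ s y) + 1)
      + PPy w μ s y * (PPy w μ s y / PP w μ s y)|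
      ≤ (K3c sm c * (LPc sm sp c (w j₀) + 1) + K4c sm c) * (1 + y^2)^2 * Eb sp y := by
    have h1 := mul_log_bound (absPPyy_le (y := y) w μ hw hw1 hμ hm hs1 hs2)
      (logPP_bound (y := y) w μ hw hw1 hμ hm hs1 hs2 j₀) hZ hE hE1 hLP
    have h2 : |PPy w μ s y * (PPy w μ s y / PP w μ s y)|
        ≤ K4c sm c * (1 + y^2)^2 * Eb sp y := by
      rw [abs_of_nonneg (PPysq_nonneg w μ hw hs y)]
      exact le_ZsqE (PPysq_le w μ hw hw1 hμ hm hs1 hs2) hZ hE hK4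
    calc _ ≤ |PPyy w μ s y * (Real.log (PP w μ s y) + 1)|
          + |PPy w μ s y * (PPy w μ s y / PP w μ s y)| := abs_add_le _ _
      _ ≤ _ := by linarith
  calc |GGy w μ s y| ≤ |∑ j, w j * (ggyy s (y - μ j) * (Real.log (gg s (y - μ j)) + 1)
        + ggy s (y - μ j) * (ggy s (y - μ j) / gg s (y - μ j)))|
        + |PPyy w μ s y * (Real.log (PP w μ s y) + 1)
          + PPy w μ s y * (PPy w μ s y / PP w μ s y)| := abs_sub _ _
    _ ≤ CGy sm sp c (w j₀) * (1 + y^2)^2 * Eb sp y := by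
        unfold CGy
        nlinarith [hS, hU]

lemma absGG_le (hw : ∀ j, 0 < w j) (hw1 : ∑ j, w j = 1) (hμ : ∀ j, |μ j| ≤ c)
    (hm : 0 < sm) (hs1 : sm ≤ s) (hs2 : s ≤ sp) (j₀ : ι) :
    |GG w μ s y| ≤ CGG sm sp c (w j₀) * (1 + y^2)^2 * Eb sp y := by
  have hs : 0 < s := lt_of_lt_of_le hm hs1
  have hsp : 0 < sp := lt_of_lt_of_le hs hs2
  have hE := Eb_pos hsp y
  have hE1 := Eb_le_one hsp y
  have hZ := Z_ge_one y
  have hL := Lc_nonneg (sp := sp) hm c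
  have hLP : 0 ≤ LPc sm sp c (w j₀) := by unfold LPc; positivity
  have hS : |∑ j, w j * (ggy s (y - μ j) * (Real.log (gg s (y - μ j)) + 1))|
      ≤ K2c sm c * (Lc sm sp c + 1) * (1 + y^2)^2 * Eb sp y := by
    refine sum_weighted_le w hw hw1 fun j => ?_
    exact mul_log_bound (ggy_bound (y := y) hm hs1 hs2 (hμ j))
      (log_gg_bound (y := y) hm hs1 hs2 (hμ j)) hZ hE hE1 hL
  have hU := mul_log_bound (absPPy_le (y := y) w μ hw hw1 hμ hm hs1 hs2)
    (logPP_bound (y := y) w μ hw hw1 hμ hm hs1 hs2 j₀) hZ hE hE1 hLP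
  calc |GG w μ s y| ≤ |∑ j, w j * (ggy s (y - μ j) * (Real.log (gg s (y - μ j)) + 1))|
        + |PPy w μ s y * (Real.log (PP w μ s y) + 1)| := abs_sub _ _
    _ ≤ CGG sm sp c (w j₀) * (1 + y^2)^2 * Eb sp y := by
        unfold CGG
        nlinarith [hS, hU]

lemma absffn_le (hw : ∀ j, 0 < w j) (hw1 : ∑ j, w j = 1) (hμ : ∀ j, |μ j| ≤ c)
    (hm : 0 < sm) (hs1 : sm ≤ s) (hs2 : s ≤ sp) (j₀ : ι) :
    |ffn w μ s y| ≤ Cffn sm sp c (w j₀) * (1 + y^2)^2 * Eb sp y := by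
  have hs : 0 < s := lt_of_lt_of_le hm hs1
  have hsp : 0 < sp := lt_of_lt_of_le hs hs2
  have hE := Eb_pos hsp y
  have hE1 := Eb_le_one hsp y
  have hZ := Z_ge_one y
  have hL := Lc_nonneg (sp := sp) hm c
  have hK := Kc_pos hm c
  have hLP : 0 ≤ LPc sm sp c (w j₀) := by unfold LPc; positivity
  have step : ∀ j : ι, |gg s (y - μ j) * (Real.log (gg s (y - μ j)) - Real.log (PP w μ s y))|
      ≤ Cffn sm sp c (w j₀) * (1 + y^2)^2 * Eb sp y := by
    intro j
    have hg := gg_pos hs (y - μ j)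
    rw [abs_mul, abs_of_pos hg]
    have h1 : |Real.log (gg s (y - μ j)) - Real.log (PP w μ s y)|
        ≤ (Lc sm sp c + LPc sm sp c (w j₀)) * (1 + y^2) := by
      calc |Real.log (gg s (y - μ j)) - Real.log (PP w μ s y)|
          ≤ |Real.log (gg s (y - μ j))| + |Real.log (PP w μ s y)| := abs_sub _ _
        _ ≤ _ := by
            have ha := log_gg_bound (y := y) hm hs1 hs2 (hμ j)
            have hb := logPP_bound (y := y) w μ hw hw1 hμ hm hs1 hs2 j₀
            linarith [ha, hb]
    calc gg s (y - μ j) * |Real.log (gg s (y - μ j)) - Real.log (PP w μ s y)|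
        ≤ (Kc sm c * Eb sp y) * ((Lc sm sp c + LPc sm sp c (w j₀)) * (1 + y^2)) := by
          apply mul_le_mul (gg_le_bound hm hs1 hs2 (hμ j)) h1 (abs_nonneg _) (by positivity)
      _ ≤ Cffn sm sp c (w j₀) * (1 + y^2)^2 * Eb sp y := by
          unfold Cffn
          nlinarith [mul_nonneg (mul_nonneg (mul_nonneg hK.le (add_nonneg hL hLP)) hE.le)
            (show (0:ℝ) ≤ (1+y^2)^2 - (1+y^2) by nlinarith)]
  have hffn : ffn w μ s y = ∑ j, w j * (gg s (y - μ j)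
      * (Real.log (gg s (y - μ j)) - Real.log (PP w μ s y))) := by
    unfold ffn
    exact Finset.sum_congr rfl fun j _ => by ring
  rw [hffn]
  exact sum_weighted_le w hw hw1 fun j => step j

lemma absFFd_le (hw : ∀ j, 0 < w j) (hw1 : ∑ j, w j = 1) (hμ : ∀ j, |μ j| ≤ c)
    (hm : 0 < sm) (hs1 : sm ≤ s) (hs2 : s ≤ sp) (j₀ : ι) :
    |FFd w μ s y| ≤ CFd sm sp c (w j₀) * (1 + y^2)^2 * Eb sp y := by
  have hs : 0 < s := lt_of_lt_of_le hm hs1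
  have hsp : 0 < sp := lt_of_lt_of_le hs hs2
  have hE := Eb_pos hsp y
  have hZ := Z_ge_one y
  have hK := Kc_pos hm c
  have hc0 : 0 ≤ c := le_trans (abs_nonneg (μ (Classical.arbitrary ι))) (hμ _)
  have hGGy := absGGy_le (y := y) w μ hw hw1 hμ hm hs1 hs2 j₀
  have hmm := mm_le (y := y) w μ hw hw1 hμ hm hs1 hs2
  have hmm0 := mm_nonneg w μ hw hs y
  have hsinv : 1/(2*s^2) ≤ 1/(2*sm^2) := by
    rw [div_le_div_iff₀ (by positivity) (by positivity)]
    nlinarith [mul_le_mul hs1 hs1 hm.le hs.le]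
  have h1 : |FFd w μ s y| ≤ (1/2) * |GGy w μ s y| + 1/(2*s^2) * mm w μ s y := by
    unfold FFd
    calc |(1/2) * GGy w μ s y - 1/(2*s^2) * mm w μ s y|
        ≤ |(1/2) * GGy w μ s y| + |1/(2*s^2) * mm w μ s y| := abs_sub _ _
      _ = (1/2) * |GGy w μ s y| + 1/(2*s^2) * mm w μ s y := by
          rw [abs_mul, abs_mul, abs_of_nonneg (by positivity : (0:ℝ) ≤ 1/2),
            abs_of_nonneg (by positivity : (0:ℝ) ≤ 1/(2*s^2)), abs_of_nonneg hmm0]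
  have h2 : 1/(2*s^2) * mm w μ s y ≤ 1/(2*sm^2) * (4*c^2 * Kc sm c * Eb sp y) := by
    apply mul_le_mul hsinv hmm hmm0 (by positivity)
  have h3 : 1/(2*sm^2) * (4*c^2 * Kc sm c * Eb sp y)
      ≤ 2*c^2*Kc sm c/sm^2 * (1 + y^2)^2 * Eb sp y := by
    have hfac : (1:ℝ) ≤ (1 + y^2)^2 := by nlinarith
    have hKfac : (0:ℝ) ≤ 2*c^2*Kc sm c/sm^2 :=
      div_nonneg (mul_nonneg (by positivity) hK.le) (sq_nonneg sm)
    have heq : 1/(2*sm^2)*(4*c^2*Kc sm c*Eb sp y) = 2*c^2*Kc sm c/sm^2*Eb sp y := by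
      field_simp
      ring
    rw [heq]
    nlinarith [mul_nonneg (mul_nonneg hKfac hE.le) (sub_nonneg.mpr hfac)]
  unfold CFd
  linarith [hGGy, h1, h2, h3]

end MasterBounds


section BLemmas
variable {ι : Type*} [Fintype ι] (w μ : ι → ℝ)

noncomputable def RR (s y : ℝ) : ℝ := ∑ j, w j * μ j^2 * gg s (y - μ j)

variable [Nonempty ι]

lemma PPy_eq {s : ℝ} (hs : 0 < s) (y : ℝ) :
    PPy w μ s y = (QQ w μ s y - y * PP w μ s y) / s := by
  unfold PPy QQ PP ggy
  rw [Finset.mul_sum, ← Finset.sum_sub_distrib, Finset.sum_div]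
  refine Finset.sum_congr rfl fun j _ => ?_
  field_simp
  ring

lemma sum_sq_eq (s y : ℝ) :
    ∑ j, w j * (y - μ j)^2 * gg s (y - μ j)
      = y^2 * PP w μ s y - 2*y*QQ w μ s y + RR w μ s y := by
  unfold PP QQ RR
  rw [Finset.mul_sum, Finset.mul_sum, ← Finset.sum_sub_distrib, ← Finset.sum_add_distrib]
  exact Finset.sum_congr rfl fun j _ => by ring

lemma mm_eq (hw : ∀ j, 0 < w j) {s : ℝ} (hs : 0 < s) (y : ℝ) :
    mm w μ s y = RR w μ s y - (QQ w μ s y)^2 / PP w μ s y := by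
  have hP := PP_pos w μ hw hs y
  unfold mm
  have expand : ∀ j, w j * gg s (y - μ j) * (μ j - QQ w μ s y / PP w μ s y)^2
      = w j * μ j^2 * gg s (y - μ j)
        - 2*(QQ w μ s y / PP w μ s y) * (w j * μ j * gg s (y - μ j))
        + (QQ w μ s y / PP w μ s y)^2 * (w j * gg s (y - μ j)) := fun j => by ring
  rw [Finset.sum_congr rfl fun j _ => expand j, Finset.sum_add_distrib,
    Finset.sum_sub_distrib, ← Finset.mul_sum, ← Finset.mul_sum]
  show RR w μ s y - _ * QQ w μ s y + _ * PP w μ s y = _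
  field_simp
  ring

lemma keyid (hw : ∀ j, 0 < w j) {s : ℝ} (hs : 0 < s) (y : ℝ) :
    ∑ j, w j * (ggy s (y - μ j) * (ggy s (y - μ j) / gg s (y - μ j)))
      - PPy w μ s y * (PPy w μ s y / PP w μ s y) = (1/s^2) * mm w μ s y := by
  have hP := PP_pos w μ hw hs y
  have e1 : ∀ j : ι, w j * (ggy s (y - μ j) * (ggy s (y - μ j) / gg s (y - μ j)))
      = (1/s^2) * (w j * (y - μ j)^2 * gg s (y - μ j)) := by
    intro j
    have hg := gg_pos hs (y - μ j)
    unfold ggy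
    field_simp
  rw [Finset.sum_congr rfl fun j _ => e1 j, ← Finset.mul_sum, sum_sq_eq,
    PPy_eq w μ hs y, mm_eq w μ hw hs y]
  field_simp
  ring


end BLemmas


section CLemmas
variable {ι : Type*} [Fintype ι] (w μ : ι → ℝ) [Nonempty ι]

-- s-derivatives
lemma hasDerivAt_PP_s (hw : ∀ j, 0 < w j) {s : ℝ} (hs : 0 < s) (y : ℝ) :
    HasDerivAt (fun s => PP w μ s y) ((1/2) * PPyy w μ s y) s := by
  have h : HasDerivAt (fun s => PP w μ s y) (∑ j, w j * ((1/2) * ggyy s (y - μ j))) s := by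
    apply HasDerivAt.fun_sum
    intro j _
    exact (hasDerivAt_gg_s hs (y - μ j)).const_mul (w j)
  refine h.congr_deriv (Eq.symm ?_)
  unfold PPyy
  rw [Finset.mul_sum]
  exact Finset.sum_congr rfl fun j _ => by ring

lemma hasDerivAt_glogg_s {s : ℝ} (hs : 0 < s) (x : ℝ) :
    HasDerivAt (fun s => gg s x * Real.log (gg s x))
      ((1/2) * ggyy s x * (Real.log (gg s x) + 1)) s := by
  have hg := gg_pos hs x
  have h1 := hasDerivAt_gg_s hs x
  have h2 := h1.log (ne_of_gt hg)
  have h3 := h1.mul h2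
  refine h3.congr_deriv (Eq.symm ?_)
  field_simp

lemma hasDerivAt_ffn_s (hw : ∀ j, 0 < w j) {s : ℝ} (hs : 0 < s) (y : ℝ) :
    HasDerivAt (fun s => ffn w μ s y) (FFd w μ s y) s := by
  have hP := PP_pos w μ hw hs y
  have hfeq : ∀ s', 0 < s' → ffn w μ s' y
      = (∑ j, w j * (gg s' (y - μ j) * Real.log (gg s' (y - μ j))))
        - PP w μ s' y * Real.log (PP w μ s' y) := by
    intro s' _
    unfold ffn PP
    rw [Finset.sum_mul, ← Finset.sum_sub_distrib]
    exact Finset.sum_congr rfl fun j _ => by ring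
  have hev : (fun s => ffn w μ s y) =ᶠ[nhds s]
      (fun s => (∑ j, w j * (gg s (y - μ j) * Real.log (gg s (y - μ j))))
        - PP w μ s y * Real.log (PP w μ s y)) := by
    filter_upwards [eventually_gt_nhds hs] with t ht using hfeq t ht
  have hsum : HasDerivAt (fun s => ∑ j, w j * (gg s (y - μ j) * Real.log (gg s (y - μ j))))
      (∑ j, w j * ((1/2) * ggyy s (y - μ j) * (Real.log (gg s (y - μ j)) + 1))) s := by
    apply HasDerivAt.fun_sum
    intro j _
    exact (hasDerivAt_glogg_s hs (y - μ j)).const_mul (w j)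
  have hPlog : HasDerivAt (fun s => PP w μ s y * Real.log (PP w μ s y))
      ((1/2) * PPyy w μ s y * (Real.log (PP w μ s y) + 1)) s := by
    have h1 := hasDerivAt_PP_s w μ hw hs y
    have h2 := h1.log (ne_of_gt hP)
    have h3 := h1.mul h2
    refine h3.congr_deriv (Eq.symm ?_)
    field_simp
  have hD := hsum.sub hPlog
  have : HasDerivAt (fun s => ffn w μ s y)
      ((∑ j, w j * ((1/2) * ggyy s (y - μ j) * (Real.log (gg s (y - μ j)) + 1)))
        - (1/2) * PPyy w μ s y * (Real.log (PP w μ s y) + 1)) s :=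
    hD.congr_of_eventuallyEq hev
  refine this.congr_deriv (Eq.symm ?_)
  have hk := keyid w μ hw hs y
  unfold FFd GGy
  have hmuladd : ∀ j : ι, w j * (ggyy s (y - μ j) * (Real.log (gg s (y - μ j)) + 1)
      + ggy s (y - μ j) * (ggy s (y - μ j) / gg s (y - μ j)))
      = w j * (ggyy s (y - μ j) * (Real.log (gg s (y - μ j)) + 1))
        + w j * (ggy s (y - μ j) * (ggy s (y - μ j) / gg s (y - μ j))) := fun j => by ring
  rw [Finset.sum_congr rfl fun j _ => hmuladd j, Finset.sum_add_distrib]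
  have hsplit : ∀ j : ι, w j * ((1/2) * ggyy s (y - μ j) * (Real.log (gg s (y - μ j)) + 1))
      = (1/2) * (w j * (ggyy s (y - μ j) * (Real.log (gg s (y - μ j)) + 1))) := fun j => by ring
  rw [Finset.sum_congr rfl fun j _ => hsplit j, ← Finset.mul_sum]
  linear_combination ((1:ℝ)/2) * hk

-- y-derivatives
lemma hasDerivAt_gg_y {s : ℝ} (hs : 0 < s) (μj y : ℝ) :
    HasDerivAt (fun y => gg s (y - μj)) (ggy s (y - μj)) y := by
  exact ((hasDerivAt_gg_x hs (y - μj)).comp y ((hasDerivAt_id y).sub_const μj)).congr_deriv (mul_one _)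

lemma hasDerivAt_ggy_y {s : ℝ} (hs : 0 < s) (μj y : ℝ) :
    HasDerivAt (fun y => ggy s (y - μj)) (ggyy s (y - μj)) y := by
  exact ((hasDerivAt_ggy_x hs (y - μj)).comp y ((hasDerivAt_id y).sub_const μj)).congr_deriv (mul_one _)

lemma hasDerivAt_GG_y (hw : ∀ j, 0 < w j) {s : ℝ} (hs : 0 < s) (y : ℝ) :
    HasDerivAt (fun y => GG w μ s y) (GGy w μ s y) y := by
  have hP := PP_pos w μ hw hs y
  have hPP : HasDerivAt (fun y => PP w μ s y) (PPy w μ s y) y := by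
    apply HasDerivAt.fun_sum
    intro j _
    exact (hasDerivAt_gg_y hs (μ j) y).const_mul (w j)
  have hPPy : HasDerivAt (fun y => PPy w μ s y) (PPyy w μ s y) y := by
    apply HasDerivAt.fun_sum
    intro j _
    exact (hasDerivAt_ggy_y hs (μ j) y).const_mul (w j)
  have hterm : ∀ j : ι, HasDerivAt (fun y => ggy s (y - μ j) * (Real.log (gg s (y - μ j)) + 1))
      (ggyy s (y - μ j) * (Real.log (gg s (y - μ j)) + 1)
        + ggy s (y - μ j) * (ggy s (y - μ j) / gg s (y - μ j))) y := by
    intro j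
    have hg := gg_pos hs (y - μ j)
    have hlog : HasDerivAt (fun y => Real.log (gg s (y - μ j)) + 1)
        (ggy s (y - μ j) / gg s (y - μ j)) y :=
      ((hasDerivAt_gg_y hs (μ j) y).log (ne_of_gt hg)).add_const 1
    exact (hasDerivAt_ggy_y hs (μ j) y).mul hlog
  have hlogP : HasDerivAt (fun y => Real.log (PP w μ s y) + 1) (PPy w μ s y / PP w μ s y) y :=
    (hPP.log (ne_of_gt hP)).add_const 1
  have h2 := hPPy.mul hlogP
  have h1 : HasDerivAt (fun y => ∑ j, w j * (ggy s (y - μ j) * (Real.log (gg s (y - μ j)) + 1)))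
      (∑ j, w j * (ggyy s (y - μ j) * (Real.log (gg s (y - μ j)) + 1)
        + ggy s (y - μ j) * (ggy s (y - μ j) / gg s (y - μ j)))) y := by
    apply HasDerivAt.fun_sum
    intro j _
    exact (hterm j).const_mul (w j)
  exact h1.sub h2
end CLemmas

lemma integrable_ZsqE {sp : ℝ} (hsp : 0 < sp) (C : ℝ) :
    Integrable (fun y : ℝ => C * (1+y^2)^2 * Eb sp y) := by
  have hb : 0 < 1/(4*sp) := by positivity
  have i0 : Integrable (fun y : ℝ => Real.exp (-(1/(4*sp))*y^2)) := integrable_exp_neg_mul_sq hb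
  have i2 : Integrable (fun y : ℝ => y^2 * Real.exp (-(1/(4*sp))*y^2)) := by
    have := integrable_rpow_mul_exp_neg_mul_sq hb (by norm_num : (-1:ℝ) < 2)
    refine this.congr (Eventually.of_forall fun y => ?_)
    show y ^ (2:ℝ) * Real.exp (-(1/(4*sp))*y^2) = y^2 * Real.exp (-(1/(4*sp))*y^2)
    have h2 : y ^ (2:ℝ) = y ^ (2:ℕ) := by
      rw [show (2:ℝ) = ((2:ℕ):ℝ) by norm_num, Real.rpow_natCast]
    rw [h2]
  have i4 : Integrable (fun y : ℝ => y^4 * Real.exp (-(1/(4*sp))*y^2)) := by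
    have := integrable_rpow_mul_exp_neg_mul_sq hb (by norm_num : (-1:ℝ) < 4)
    refine this.congr (Eventually.of_forall fun y => ?_)
    show y ^ (4:ℝ) * Real.exp (-(1/(4*sp))*y^2) = y^4 * Real.exp (-(1/(4*sp))*y^2)
    have h4 : y ^ (4:ℝ) = y ^ (4:ℕ) := by
      rw [show (4:ℝ) = ((4:ℕ):ℝ) by norm_num, Real.rpow_natCast]
    rw [h4]
  have hsum := ((i0.add (i2.const_mul 2)).add i4).const_mul C
  refine hsum.congr (Eventually.of_forall fun y => ?_)
  show C * ((Real.exp (-(1/(4*sp))*y^2) + 2*(y^2 * Real.exp (-(1/(4*sp))*y^2)))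
      + y^4 * Real.exp (-(1/(4*sp))*y^2)) = C * (1+y^2)^2 * Eb sp y
  unfold Eb
  rw [show -(y^2/(4*sp)) = -(1/(4*sp))*y^2 by ring]
  ring

lemma tendsto_pow_mul_exp_neg_mul (n : ℕ) {β : ℝ} (hβ : 0 < β) :
    Tendsto (fun t : ℝ => t^n * Real.exp (-(β*t))) atTop (nhds 0) := by
  have h1 := tendsto_pow_mul_exp_neg_atTop_nhds_zero n
  have h2 : Tendsto (fun t : ℝ => β*t) atTop atTop :=
    Tendsto.const_mul_atTop hβ tendsto_id
  have h3 := (h1.comp h2).const_mul ((β^n)⁻¹)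
  rw [mul_zero] at h3
  refine h3.congr fun t => ?_
  have hβn : β^n ≠ 0 := by positivity
  simp only [Function.comp]
  rw [mul_pow]
  field_simp

lemma tendsto_ZsqE_aux {sp : ℝ} (hsp : 0 < sp) (C : ℝ) :
    Tendsto (fun t : ℝ => C * (1+t)^2 * Real.exp (-(1/(4*sp))*t)) atTop (nhds 0) := by
  have hβ : 0 < 1/(4*sp) := by positivity
  have h0 := (tendsto_pow_mul_exp_neg_mul 0 hβ).const_mul C
  have h1 := (tendsto_pow_mul_exp_neg_mul 1 hβ).const_mul (2*C)
  have h2 := (tendsto_pow_mul_exp_neg_mul 2 hβ).const_mul C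
  rw [mul_zero] at h0 h1 h2
  have := (h0.add h1).add h2
  rw [add_zero, add_zero] at this
  refine this.congr fun t => ?_
  simp only [pow_zero, pow_one]
  ring

lemma tendsto_ZsqE_atTop {sp : ℝ} (hsp : 0 < sp) (C : ℝ) :
    Tendsto (fun y : ℝ => C * (1+y^2)^2 * Eb sp y) atTop (nhds 0) := by
  have hsq : Tendsto (fun y : ℝ => y^2) atTop atTop := by
    exact tendsto_pow_atTop (by norm_num)
  have := (tendsto_ZsqE_aux hsp C).comp hsq
  refine this.congr fun y => ?_
  simp only [Function.comp]
  unfold Eb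
  congr 2
  ring

lemma tendsto_ZsqE_atBot {sp : ℝ} (hsp : 0 < sp) (C : ℝ) :
    Tendsto (fun y : ℝ => C * (1+y^2)^2 * Eb sp y) atBot (nhds 0) := by
  have hsq : Tendsto (fun y : ℝ => y^2) atBot atTop := by
    have h1 : Tendsto (fun y : ℝ => (-y)^2) atBot atTop :=
      (tendsto_pow_atTop (by norm_num : (2:ℕ) ≠ 0)).comp tendsto_neg_atBot_atTop
    refine h1.congr fun y => by ring
  have := (tendsto_ZsqE_aux hsp C).comp hsq
  refine this.congr fun y => ?_
  simp only [Function.comp]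
  unfold Eb
  congr 2
  ring

-- continuity
lemma cont_gg_shift (s μj : ℝ) : Continuous (fun y => gg s (y - μj)) := by
  unfold gg
  exact continuous_const.mul
    ((((continuous_id.sub continuous_const).pow 2).neg.div_const (2*s)).rexp)

lemma cont_ggy_shift (s μj : ℝ) : Continuous (fun y => ggy s (y - μj)) := by
  unfold ggy
  exact (((continuous_id.sub continuous_const).div_const s).neg).mul (cont_gg_shift s μj)

lemma cont_ggyy_shift (s μj : ℝ) : Continuous (fun y => ggyy s (y - μj)) := by
  unfold ggyy
  exact ((((continuous_id.sub continuous_const).pow 2).div_const (s^2)).sub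
    continuous_const).mul (cont_gg_shift s μj)

section Cont
variable {ι : Type*} [Fintype ι] (w μ : ι → ℝ) [Nonempty ι]

lemma cont_PP (s : ℝ) : Continuous (fun y => PP w μ s y) :=
  continuous_finset_sum _ fun j _ => continuous_const.mul (cont_gg_shift s (μ j))
lemma cont_QQ (s : ℝ) : Continuous (fun y => QQ w μ s y) :=
  continuous_finset_sum _ fun j _ => continuous_const.mul (cont_gg_shift s (μ j))
lemma cont_PPy (s : ℝ) : Continuous (fun y => PPy w μ s y) :=
  continuous_finset_sum _ fun j _ => continuous_const.mul (cont_ggy_shift s (μ j))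
lemma cont_PPyy (s : ℝ) : Continuous (fun y => PPyy w μ s y) :=
  continuous_finset_sum _ fun j _ => continuous_const.mul (cont_ggyy_shift s (μ j))

lemma cont_logPP (hw : ∀ j, 0 < w j) {s : ℝ} (hs : 0 < s) :
    Continuous (fun y => Real.log (PP w μ s y)) :=
  (cont_PP w μ s).log fun y => (PP_pos w μ hw hs y).ne'

lemma cont_ffn (hw : ∀ j, 0 < w j) {s : ℝ} (hs : 0 < s) :
    Continuous (fun y => ffn w μ s y) := by
  unfold ffn
  refine continuous_finset_sum _ fun j _ => ?_
  exact (continuous_const.mul (cont_gg_shift s (μ j))).mul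
    (((cont_gg_shift s (μ j)).log fun y => (gg_pos hs _).ne').sub (cont_logPP w μ hw hs))

lemma cont_mm (hw : ∀ j, 0 < w j) {s : ℝ} (hs : 0 < s) :
    Continuous (fun y => mm w μ s y) := by
  unfold mm
  refine continuous_finset_sum _ fun j _ => ?_
  exact (continuous_const.mul (cont_gg_shift s (μ j))).mul
    ((continuous_const.sub ((cont_QQ w μ s).div (cont_PP w μ s)
      fun y => (PP_pos w μ hw hs y).ne')).pow 2)

lemma cont_GGy (hw : ∀ j, 0 < w j) {s : ℝ} (hs : 0 < s) :
    Continuous (fun y => GGy w μ s y) := by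
  unfold GGy
  refine Continuous.sub ?_ ?_
  · refine continuous_finset_sum _ fun j _ => ?_
    refine continuous_const.mul (Continuous.add ?_ ?_)
    · exact (cont_ggyy_shift s (μ j)).mul
        (((cont_gg_shift s (μ j)).log fun y => (gg_pos hs _).ne').add continuous_const)
    · exact (cont_ggy_shift s (μ j)).mul
        ((cont_ggy_shift s (μ j)).div (cont_gg_shift s (μ j)) fun y => (gg_pos hs _).ne')
  · refine Continuous.add ?_ ?_
    · exact (cont_PPyy w μ s).mul ((cont_logPP w μ hw hs).add continuous_const)
    · exact (cont_PPy w μ s).mul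
        ((cont_PPy w μ s).div (cont_PP w μ s) fun y => (PP_pos w μ hw hs y).ne')

lemma cont_FFd (hw : ∀ j, 0 < w j) {s : ℝ} (hs : 0 < s) :
    Continuous (fun y => FFd w μ s y) := by
  unfold FFd
  exact (continuous_const.mul (cont_GGy w μ hw hs)).sub
    (continuous_const.mul (cont_mm w μ hw hs))
end Cont

theorem core {ι : Type*} [Fintype ι] [Nonempty ι] (w μ : ι → ℝ)
    (hw : ∀ j, 0 < w j) (hw1 : ∑ j, w j = 1) {s₀ : ℝ} (hs₀ : 0 < s₀) :
    HasDerivAt (fun s => ∫ y : ℝ, ffn w μ s y)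
      (-(1/(2*s₀^2)) * ∫ y : ℝ, mm w μ s₀ y) s₀ := by
  set sm := s₀/2 with hsm
  set sp := 3*s₀/2 with hsp'
  have hm : 0 < sm := by positivity
  have hsppos : 0 < sp := by positivity
  set c := ∑ j, |μ j| with hcdef
  have hμ : ∀ j, |μ j| ≤ c := fun j =>
    Finset.single_le_sum (f := fun i => |μ i|) (fun i _ => abs_nonneg _) (mem_univ j)
  set j₀ : ι := Classical.arbitrary ι with hj₀
  have hball : ∀ s ∈ Metric.ball s₀ (s₀/2), sm ≤ s ∧ s ≤ sp ∧ 0 < s := by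
    intro s hsball
    rw [Metric.mem_ball, Real.dist_eq, abs_lt] at hsball
    refine ⟨by linarith [hsball.1], by linarith [hsball.2], by linarith [hsball.1]⟩
  have hs₀mem : sm ≤ s₀ ∧ s₀ ≤ sp := ⟨by linarith, by linarith⟩
  have hmain := hasDerivAt_integral_of_dominated_loc_of_deriv_le
    (F := fun s y => ffn w μ s y) (F' := fun s y => FFd w μ s y)
    (x₀ := s₀) (s := Metric.ball s₀ (s₀/2))
    (bound := fun y => CFd sm sp c (w j₀) * (1+y^2)^2 * Eb sp y)
    (Metric.ball_mem_nhds _ (by positivity))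
    (by
      filter_upwards [eventually_gt_nhds hs₀] with s hs
      exact (cont_ffn w μ hw hs).aestronglyMeasurable)
    (by
      refine Integrable.mono' (integrable_ZsqE hsppos (Cffn sm sp c (w j₀)))
        (cont_ffn w μ hw hs₀).aestronglyMeasurable ?_
      exact ae_of_all _ fun y =>
        absffn_le w μ hw hw1 hμ hm hs₀mem.1 hs₀mem.2 j₀)
    ((cont_FFd w μ hw hs₀).aestronglyMeasurable)
    (ae_of_all _ fun y s hs => by
      obtain ⟨h1, h2, _⟩ := hball s hs
      exact absFFd_le w μ hw hw1 hμ hm h1 h2 j₀)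
    (integrable_ZsqE hsppos _)
    (ae_of_all _ fun y s hs => hasDerivAt_ffn_s w μ hw (hball s hs).2.2 y)
  obtain ⟨hFdint, hderiv⟩ := hmain
  -- rewrite the integral of FFd
  have hGGyint : Integrable (fun y => GGy w μ s₀ y) := by
    refine Integrable.mono' (integrable_ZsqE hsppos (CGy sm sp c (w j₀)))
      (cont_GGy w μ hw hs₀).aestronglyMeasurable ?_
    exact ae_of_all _ fun y => absGGy_le w μ hw hw1 hμ hm hs₀mem.1 hs₀mem.2 j₀
  have hmmint : Integrable (fun y => mm w μ s₀ y) := by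
    refine Integrable.mono' (integrable_ZsqE hsppos (4*c^2 * Kc sm c))
      (cont_mm w μ hw hs₀).aestronglyMeasurable ?_
    refine ae_of_all _ fun y => ?_
    rw [Real.norm_eq_abs, abs_of_nonneg (mm_nonneg w μ hw hs₀ y)]
    refine le_trans (mm_le w μ hw hw1 hμ hm hs₀mem.1 hs₀mem.2) ?_
    have hE := Eb_pos hsppos y
    have hZ := Z_ge_one y
    have hKpos := Kc_pos hm c
    nlinarith [mul_nonneg (mul_nonneg (by positivity : (0:ℝ) ≤ 4*c^2) hKpos.le) hE.le,
      sq_nonneg (1+y^2), mul_nonneg (mul_nonneg (mul_nonneg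
        (by positivity : (0:ℝ) ≤ 4*c^2) hKpos.le) hE.le)
        (show (0:ℝ) ≤ (1+y^2)^2 - 1 by nlinarith)]
  -- ∫ GGy = 0
  have hGG0 : (∫ y : ℝ, GGy w μ s₀ y) = 0 := by
    have htop : Tendsto (fun y => GG w μ s₀ y) atTop (nhds 0) := by
      apply squeeze_zero_norm (fun y => ?_) (tendsto_ZsqE_atTop hsppos (CGG sm sp c (w j₀)))
      exact absGG_le w μ hw hw1 hμ hm hs₀mem.1 hs₀mem.2 j₀
    have hbot : Tendsto (fun y => GG w μ s₀ y) atBot (nhds 0) := by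
      apply squeeze_zero_norm (fun y => ?_) (tendsto_ZsqE_atBot hsppos (CGG sm sp c (w j₀)))
      exact absGG_le w μ hw hw1 hμ hm hs₀mem.1 hs₀mem.2 j₀
    have hIoi : (∫ y in Set.Ioi (0:ℝ), GGy w μ s₀ y) = 0 - GG w μ s₀ 0 :=
      integral_Ioi_of_hasDerivAt_of_tendsto'
        (fun x _ => hasDerivAt_GG_y w μ hw hs₀ x) hGGyint.integrableOn htop
    have hIic : (∫ y in Set.Iic (0:ℝ), GGy w μ s₀ y) = GG w μ s₀ 0 - 0 :=
      integral_Iic_of_hasDerivAt_of_tendsto'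
        (fun x _ => hasDerivAt_GG_y w μ hw hs₀ x) hGGyint.integrableOn hbot
    have hsplit := intervalIntegral.integral_Iic_add_Ioi (b := (0:ℝ))
      hGGyint.integrableOn hGGyint.integrableOn
    rw [← hsplit, hIoi, hIic]
    ring
  have hint_eq : (∫ y : ℝ, FFd w μ s₀ y) = -(1/(2*s₀^2)) * ∫ y : ℝ, mm w μ s₀ y := by
    have h1 : (fun y => FFd w μ s₀ y)
        = fun y => (1/2) * GGy w μ s₀ y - 1/(2*s₀^2) * mm w μ s₀ y := rfl
    rw [h1, integral_sub (hGGyint.const_mul _) (hmmint.const_mul _),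
      integral_const_mul, integral_const_mul, hGG0]
    ring
  rw [← hint_eq]
  exact hderiv

/-- Paper's Theorem 3 (real-valued convention): gradient of the interference-as-noise mutual
information of user 2 with respect to the interferer's power `P₁`. User 1's signal is absorbed
into the Gaussian noise with variance `h₁₁²P₁ + 1`, and
`dI/dP₁ = -(snr·h₁₁²·h₁₂²·P₂)/(2·(h₁₁²·P₁+1)²) · E₂₂(P₁)`. -/
theorem stmt_8 {ι : Type*} [Fintype ι]
    (v : ι → ℝ) (p₂ : ι → ℝ) (hp₂pos : ∀ j, 0 < p₂ j) (hp₂sum : ∑ j, p₂ j = 1)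
    (snr h₁₁ h₁₂ P₂ : ℝ) (hsnr : 0 < snr) (hh₁₁ : 0 < h₁₁) (hh₁₂ : 0 < h₁₂) (hP₂ : 0 < P₂)
    (φ : ℝ → ℝ) (hφ : φ = fun t => (Real.sqrt (2 * Real.pi))⁻¹ * Real.exp (-t ^ 2 / 2))
    (σf : ℝ → ℝ) (hσf : σf = fun P₁ => Real.sqrt (h₁₁ ^ 2 * P₁ + 1))
    (pyx : ℝ → ℝ → ι → ℝ)
    (hpyx : pyx = fun P₁ y j =>
        (1 / σf P₁) * φ ((y - Real.sqrt snr * h₁₂ * Real.sqrt P₂ * v j) / σf P₁))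
    (py : ℝ → ℝ → ℝ) (hpy : py = fun P₁ y => ∑ j, p₂ j * pyx P₁ y j)
    (I : ℝ → ℝ)
    (hI : I = fun P₁ => ∫ y : ℝ, ∑ j, p₂ j * pyx P₁ y j *
        Real.log (pyx P₁ y j / py P₁ y))
    (xhat : ℝ → ℝ → ℝ)
    (hxhat : xhat = fun P₁ y => (∑ j, v j * (p₂ j * pyx P₁ y j)) / py P₁ y)
    (E₂₂ : ℝ → ℝ)
    (hE₂₂ : E₂₂ = fun P₁ => ∫ y : ℝ, ∑ j, p₂ j * pyx P₁ y j * (v j - xhat P₁ y) ^ 2) :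
    ∀ P₁ : ℝ, 0 ≤ P₁ →
      HasDerivAt I
        (-(snr * h₁₁ ^ 2 * h₁₂ ^ 2 * P₂) / (2 * (h₁₁ ^ 2 * P₁ + 1) ^ 2) * E₂₂ P₁) P₁ := by
  intro P₁ hP₁
  have hNonempty : Nonempty ι := by
    by_contra h
    rw [not_nonempty_iff] at h
    rw [Finset.univ_eq_empty, Finset.sum_empty] at hp₂sum
    norm_num at hp₂sum
  set a : ℝ := Real.sqrt snr * h₁₂ * Real.sqrt P₂ with ha
  have hapos : 0 < a := by
    rw [ha]; positivity
  have ha2 : a^2 = snr * h₁₂^2 * P₂ := by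
    rw [ha, mul_pow, mul_pow, Real.sq_sqrt hsnr.le, Real.sq_sqrt hP₂.le]
  set μf : ι → ℝ := fun j => a * v j with hμf
  have hs₀pos : 0 < h₁₁^2*P₁+1 := by positivity
  -- pointwise identification of the kernels
  have hgg : ∀ (x : ℝ) {s : ℝ}, 0 < s →
      (1 / Real.sqrt s) * ((Real.sqrt (2*Real.pi))⁻¹ * Real.exp (-(x/Real.sqrt s)^2/2))
        = gg s x := by
    intro x s hs
    unfold gg
    have hexp : -(x/Real.sqrt s)^2/2 = -x^2/(2*s) := by
      rw [div_pow, Real.sq_sqrt hs.le]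
      ring
    rw [hexp, Real.sqrt_mul (by positivity) s, mul_inv]
    ring
  have hpyx_eq : ∀ (x : ℝ), 0 < h₁₁^2*x+1 → ∀ (y : ℝ) (j : ι),
      pyx x y j = gg (h₁₁^2*x+1) (y - μf j) := by
    intro x hx y j
    rw [hpyx, hφ, hσf]
    exact hgg (y - a * v j) hx
  have hpy_eq : ∀ (x : ℝ), 0 < h₁₁^2*x+1 → ∀ (y : ℝ),
      py x y = PP p₂ μf (h₁₁^2*x+1) y := by
    intro x hx y
    rw [hpy]
    exact Finset.sum_congr rfl fun j _ => by rw [hpyx_eq x hx y j]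
  -- eventual equality of I with the reparametrized integral
  have hopen : IsOpen {x : ℝ | 0 < h₁₁^2*x+1} :=
    isOpen_lt continuous_const (by continuity)
  have hnhds : {x : ℝ | 0 < h₁₁^2*x+1} ∈ nhds P₁ := hopen.mem_nhds hs₀pos
  have hIeq : I =ᶠ[nhds P₁] fun x => ∫ y : ℝ, ffn p₂ μf (h₁₁^2*x+1) y := by
    filter_upwards [hnhds] with x hx
    simp only [hI]
    congr 1
    funext y
    refine Finset.sum_congr rfl fun j _ => ?_
    rw [hpyx_eq x hx y j, hpy_eq x hx y]
    rw [Real.log_div (gg_pos hx _).ne' (PP_pos p₂ μf hp₂pos hx y).ne']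
  -- E₂₂ in terms of mm
  have hxhat_eq : ∀ y : ℝ, xhat P₁ y
      = (∑ j, v j * (p₂ j * gg (h₁₁^2*P₁+1) (y - μf j))) / PP p₂ μf (h₁₁^2*P₁+1) y := by
    intro y
    simp only [hxhat]
    rw [hpy_eq P₁ hs₀pos y]
    congr 1
    exact Finset.sum_congr rfl fun i _ => by rw [hpyx_eq P₁ hs₀pos y i]
  have hmm_eq : ∀ y : ℝ, mm p₂ μf (h₁₁^2*P₁+1) y
      = a^2 * (∑ j, p₂ j * pyx P₁ y j * (v j - xhat P₁ y) ^ 2) := by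
    intro y
    unfold mm
    rw [Finset.mul_sum]
    refine Finset.sum_congr rfl fun j _ => ?_
    have hq : QQ p₂ μf (h₁₁^2*P₁+1) y
        = a * ∑ i, v i * (p₂ i * gg (h₁₁^2*P₁+1) (y - μf i)) := by
      unfold QQ
      rw [Finset.mul_sum]
      refine Finset.sum_congr rfl fun i _ => ?_
      simp only [hμf]
      ring
    rw [hpyx_eq P₁ hs₀pos y j, hxhat_eq y, hq, mul_div_assoc]
    simp only [hμf]
    ring
  have hE22val : E₂₂ P₁ = (1/a^2) * ∫ y : ℝ, mm p₂ μf (h₁₁^2*P₁+1) y := by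
    simp only [hE₂₂]
    rw [show (fun y => mm p₂ μf (h₁₁^2*P₁+1) y)
        = fun y => a^2 * (∑ j, p₂ j * pyx P₁ y j * (v j - xhat P₁ y) ^ 2) from
      funext hmm_eq]
    rw [integral_const_mul]
    field_simp
  -- chain rule
  have hlin : HasDerivAt (fun x : ℝ => h₁₁^2*x+1) (h₁₁^2) P₁ := by
    simpa using ((hasDerivAt_id P₁).const_mul (h₁₁^2)).add_const 1
  have hF := (core p₂ μf hp₂pos hp₂sum hs₀pos).comp P₁ hlin
  have hFinal : HasDerivAt (fun x => ∫ y : ℝ, ffn p₂ μf (h₁₁^2*x+1) y)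
      ((-(1/(2*(h₁₁^2*P₁+1)^2)) * ∫ y : ℝ, mm p₂ μf (h₁₁^2*P₁+1) y) * h₁₁^2) P₁ := hF
  have hres := hFinal.congr_of_eventuallyEq hIeq
  refine hres.congr_deriv (Eq.symm ?_)
  have hK : snr * h₁₁^2 * h₁₂^2 * P₂ = a^2 * h₁₁^2 := by rw [ha2]; ring
  rw [hE22val]
  rw [show snr * h₁₁ ^ 2 * h₁₂ ^ 2 * P₂ = a^2 * h₁₁^2 from hK]
  have hane : a ≠ 0 := hapos.ne'
  have hs₀ne : (h₁₁^2*P₁+1) ≠ 0 := hs₀pos.ne'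
  field_simp
end

section
/- Let x₁ be a real random variable taking finitely many values with probability mass function p₁, let x₂ and n be independent standard real Gaussians, both independent of x₁, let snr > 0, a, b ∈ ℝ, g₁, g₂ ≥ 0, and set y = √snr·(a·g₁·x₁ + b·g₂·x₂) + n. Let φ be the standard normal density, let p_{y|x₁}(y|x₁) be the Gaussian density in y with mean √snr·a·g₁·x₁ and variance 1 + snr·b²·g₂², and let p_y(y) = Σ_{x₁} p₁(x₁)·p_{y|x₁}(y|x₁). Define I(x₁,x₂;y) = Σ_{x₁} p₁(x₁)·∫∫ φ(x₂)·φ(y − √snr(a g₁ x₁ + b g₂ x₂))·log(φ(y − √snr(a g₁ x₁ + b g₂ x₂))/p_y(y)) dy dx₂ and I(x₁;y) = ∫ Σ_{x₁} p₁(x₁)·p_{y|x₁}(y|x₁)·log(p_{y|x₁}(y|x₁)/p_y(y)) dy. Then I(x₁,x₂;y) = I(x₁;y) + (1/2)·log(1 + snr·b²·g₂²). -/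
open MeasureTheory Finset

section AuxGaussian
open Real

noncomputable def gpdf (m t y : ℝ) : ℝ :=
  (Real.sqrt (2 * Real.pi * t))⁻¹ * Real.exp (-(y - m) ^ 2 / (2 * t))

variable {m t y ν c : ℝ}

lemma twopit_pos (ht : 0 < t) : 0 < 2 * Real.pi * t := by positivity

lemma gpdf_pos (ht : 0 < t) : 0 < gpdf m t y := by
  unfold gpdf
  have h : 0 < 2 * Real.pi * t := by positivity
  positivity

lemma gpdf_eq (ht : 0 < t) :
    gpdf m t = fun y => (Real.sqrt (2 * Real.pi * t))⁻¹ *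
      Real.exp (-(1 / (2 * t)) * (y - m) ^ 2) := by
  funext y
  unfold gpdf
  congr 1
  rw [neg_div, neg_mul, div_eq_mul_inv, mul_comm, one_div, inv_mul_eq_div, div_eq_mul_inv]

lemma continuous_gpdf : Continuous (gpdf m t) := by
  unfold gpdf
  fun_prop

lemma integrable_gpdf (ht : 0 < t) : Integrable (gpdf m t) := by
  rw [gpdf_eq ht]
  exact ((integrable_exp_neg_mul_sq (by positivity : (0:ℝ) < 1 / (2 * t))).comp_sub_right
    m).const_mul _

lemma integral_gpdf (ht : 0 < t) : ∫ y, gpdf m t y = 1 := by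
  rw [gpdf_eq ht]
  rw [MeasureTheory.integral_const_mul]
  rw [show (fun y => Real.exp (-(1 / (2 * t)) * (y - m) ^ 2)) =
    (fun y => Real.exp (-(1 / (2 * t)) * y ^ 2)) ∘ (fun y => y - m) from rfl]
  rw [Function.comp_def, MeasureTheory.integral_sub_right_eq_self
    (fun y => Real.exp (-(1 / (2 * t)) * y ^ 2)) m, integral_gaussian]
  rw [show Real.pi / (1 / (2 * t)) = 2 * Real.pi * t by field_simp]
  exact inv_mul_cancel₀ (by positivity)

lemma sq_mul_exp_le {b x : ℝ} (hb : 0 < b) :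
    x ^ 2 * Real.exp (-b * x ^ 2) ≤ (2 / b) * Real.exp (-(b / 2) * x ^ 2) := by
  have h1 : (b / 2) * x ^ 2 ≤ Real.exp ((b / 2) * x ^ 2) :=
    le_trans (le_add_of_nonneg_right zero_le_one) (Real.add_one_le_exp _)
  have h2 : x ^ 2 ≤ (2 / b) * Real.exp ((b / 2) * x ^ 2) := by
    have h3 := mul_le_mul_of_nonneg_left h1 (by positivity : (0:ℝ) ≤ 2 / b)
    calc x ^ 2 = (2 / b) * ((b / 2) * x ^ 2) := by field_simp
      _ ≤ _ := h3
  calc x ^ 2 * Real.exp (-b * x ^ 2)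
      ≤ ((2 / b) * Real.exp ((b / 2) * x ^ 2)) * Real.exp (-b * x ^ 2) :=
        mul_le_mul_of_nonneg_right h2 (Real.exp_nonneg _)
    _ = (2 / b) * Real.exp (-(b / 2) * x ^ 2) := by
        rw [mul_assoc, ← Real.exp_add]; congr 2; ring

lemma integrable_sq_mul_exp {b : ℝ} (hb : 0 < b) :
    Integrable fun x : ℝ => x ^ 2 * Real.exp (-b * x ^ 2) := by
  refine Integrable.mono' ((integrable_exp_neg_mul_sq (by positivity : (0:ℝ) < b / 2)).const_mul
    (2 / b)) (Continuous.aestronglyMeasurable (by continuity)) (Filter.Eventually.of_forall fun x => ?_)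
  rw [Real.norm_eq_abs, abs_of_nonneg (by positivity)]
  exact sq_mul_exp_le hb

lemma integral_sq_mul_exp {b : ℝ} (hb : 0 < b) :
    ∫ x : ℝ, x ^ 2 * Real.exp (-b * x ^ 2) = (1 / (2 * b)) * Real.sqrt (Real.pi / b) := by
  have h1 : ∫ x : ℝ, x ^ 2 * Real.exp (-b * x ^ 2)
      = 2 * ∫ x in Set.Ioi (0:ℝ), x ^ 2 * Real.exp (-b * x ^ 2) := by
    rw [← integral_comp_abs (f := fun x => x ^ 2 * Real.exp (-b * x ^ 2))]
    congr 1; funext x; rw [sq_abs]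
  have h2 : ∫ x in Set.Ioi (0:ℝ), x ^ 2 * Real.exp (-b * x ^ 2)
      = ∫ x in Set.Ioi (0:ℝ), x ^ (2:ℝ) * Real.exp (-b * x ^ (2:ℝ)) := by
    refine setIntegral_congr_fun measurableSet_Ioi (fun x hx => ?_)
    rw [show (2:ℝ) = ((2:ℕ):ℝ) by norm_num, Real.rpow_natCast]
  have h3 := integral_rpow_mul_exp_neg_mul_rpow (p := 2) (q := 2) (b := b)
    (by norm_num) (by norm_num) hb
  have hG : Real.Gamma ((2 + 1) / 2) = Real.sqrt Real.pi / 2 := by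
    rw [show ((2:ℝ) + 1) / 2 = 1/2 + 1 by norm_num, Real.Gamma_add_one (by norm_num),
      Real.Gamma_one_half_eq]
    ring
  rw [h1, h2, h3, hG]
  have hsb : Real.sqrt b ≠ 0 := by positivity
  rw [show (-((2:ℝ) + 1) / 2) = -(1 + 1/2) by norm_num, Real.rpow_neg hb.le,
    Real.rpow_add hb, Real.rpow_one, ← Real.sqrt_eq_rpow, Real.sqrt_div pi_pos.le]
  have hb' : b ≠ 0 := hb.ne'
  have hss : Real.sqrt b * Real.sqrt b = b := Real.mul_self_sqrt hb.le
  field_simp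

lemma integral_odd_exp {b : ℝ} (hb : 0 < b) :
    ∫ x : ℝ, x * Real.exp (-b * x ^ 2) = 0 := by
  have h := MeasureTheory.integral_neg_eq_self (fun x : ℝ => x * Real.exp (-b * x ^ 2)) volume
  simp only [neg_sq, neg_mul] at h
  have h2 : ∫ x : ℝ, -(x * Real.exp (-(b * x ^ 2))) = ∫ x : ℝ, x * Real.exp (-(b * x ^ 2)) := h
  rw [MeasureTheory.integral_neg] at h2
  simp only [neg_mul]
  linarith

lemma integrable_gpdf_mul_center (ht : 0 < t) :
    Integrable fun y => gpdf m t y * (y - m) := by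
  have h : (fun y => gpdf m t y * (y - m)) = fun y =>
      (Real.sqrt (2 * Real.pi * t))⁻¹ * ((y - m) * Real.exp (-(1 / (2 * t)) * (y - m) ^ 2)) := by
    rw [gpdf_eq ht]; funext y; ring
  rw [h]
  exact (((integrable_mul_exp_neg_mul_sq (by positivity : (0:ℝ) < 1 / (2 * t))).comp_sub_right
    m)).const_mul _

lemma integral_gpdf_mul_center (ht : 0 < t) : ∫ y, gpdf m t y * (y - m) = 0 := by
  have h : (fun y => gpdf m t y * (y - m)) = fun y =>
      (Real.sqrt (2 * Real.pi * t))⁻¹ * ((fun z => z * Real.exp (-(1 / (2 * t)) * z ^ 2)) (y - m)) := by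
    rw [gpdf_eq ht]; funext y; simp only; ring
  rw [h, MeasureTheory.integral_const_mul, MeasureTheory.integral_sub_right_eq_self
    (fun z => z * Real.exp (-(1 / (2 * t)) * z ^ 2)) m,
    integral_odd_exp (by positivity : (0:ℝ) < 1 / (2 * t)), mul_zero]

lemma integrable_gpdf_mul_sq_center (ht : 0 < t) :
    Integrable fun y => gpdf m t y * (y - m) ^ 2 := by
  have h : (fun y => gpdf m t y * (y - m) ^ 2) = fun y =>
      (Real.sqrt (2 * Real.pi * t))⁻¹ *
        ((fun z => z ^ 2 * Real.exp (-(1 / (2 * t)) * z ^ 2)) (y - m)) := by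
    rw [gpdf_eq ht]; funext y; simp only; ring
  rw [h]
  exact ((integrable_sq_mul_exp (by positivity : (0:ℝ) < 1 / (2 * t))).comp_sub_right
    m).const_mul _

lemma integral_gpdf_mul_sq_center (ht : 0 < t) : ∫ y, gpdf m t y * (y - m) ^ 2 = t := by
  have h : (fun y => gpdf m t y * (y - m) ^ 2) = fun y =>
      (Real.sqrt (2 * Real.pi * t))⁻¹ *
        ((fun z => z ^ 2 * Real.exp (-(1 / (2 * t)) * z ^ 2)) (y - m)) := by
    rw [gpdf_eq ht]; funext y; simp only; ring
  rw [h, MeasureTheory.integral_const_mul, MeasureTheory.integral_sub_right_eq_self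
    (fun z => z ^ 2 * Real.exp (-(1 / (2 * t)) * z ^ 2)) m,
    integral_sq_mul_exp (by positivity : (0:ℝ) < 1 / (2 * t))]
  rw [show Real.pi / (1 / (2 * t)) = 2 * Real.pi * t by field_simp,
    show (1:ℝ) / (2 * (1 / (2 * t))) = t by field_simp]
  have h2 : Real.sqrt (2 * Real.pi * t) ≠ 0 := by positivity
  field_simp

lemma gpdf_sq_expand (ν : ℝ) : (fun y => gpdf m t y * (y - ν) ^ 2) = fun y =>
    gpdf m t y * (y - m) ^ 2 + (2 * (m - ν)) * (gpdf m t y * (y - m)) +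
      (m - ν) ^ 2 * gpdf m t y := by
  funext y; ring

lemma integrable_gpdf_mul_sq (ht : 0 < t) (ν : ℝ) :
    Integrable fun y => gpdf m t y * (y - ν) ^ 2 := by
  rw [gpdf_sq_expand]
  exact ((integrable_gpdf_mul_sq_center ht).add
    ((integrable_gpdf_mul_center ht).const_mul _)).add ((integrable_gpdf ht).const_mul _)

lemma integral_gpdf_mul_sq (ht : 0 < t) (ν : ℝ) :
    ∫ y, gpdf m t y * (y - ν) ^ 2 = t + (m - ν) ^ 2 := by
  rw [gpdf_sq_expand]
  have i1 : Integrable fun y => gpdf m t y * (y - m) ^ 2 +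
      2 * (m - ν) * (gpdf m t y * (y - m)) :=
    (integrable_gpdf_mul_sq_center (m := m) ht).add
      ((integrable_gpdf_mul_center (m := m) ht).const_mul _)
  rw [MeasureTheory.integral_add i1 ((integrable_gpdf (m := m) ht).const_mul _),
    MeasureTheory.integral_add (integrable_gpdf_mul_sq_center (m := m) ht)
      ((integrable_gpdf_mul_center (m := m) ht).const_mul _),
    MeasureTheory.integral_const_mul, MeasureTheory.integral_const_mul,
    integral_gpdf_mul_sq_center ht, integral_gpdf_mul_center ht, integral_gpdf ht]
  ring

lemma log_gpdf (ht : 0 < t) :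
    Real.log (gpdf m t y) = -Real.log (Real.sqrt (2 * Real.pi * t)) - (y - m) ^ 2 / (2 * t) := by
  unfold gpdf
  rw [Real.log_mul (by positivity) (Real.exp_ne_zero _), Real.log_inv, Real.log_exp]
  ring

lemma integrable_gpdf_mul (ht : 0 < t) {L : ℝ → ℝ} (hL : AEStronglyMeasurable L volume)
    (A B ν : ℝ) (hbound : ∀ y, |L y| ≤ A + B * (y - ν) ^ 2) :
    Integrable fun y => gpdf m t y * L y := by
  refine Integrable.mono' (((integrable_gpdf (m := m) ht).const_mul |A|).add
    ((integrable_gpdf_mul_sq (m := m) ht ν).const_mul |B|))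
    (continuous_gpdf.aestronglyMeasurable.mul hL) (Filter.Eventually.of_forall fun y => ?_)
  have hg := (gpdf_pos (m := m) (y := y) ht).le
  rw [Real.norm_eq_abs, abs_mul, abs_of_nonneg hg]
  calc gpdf m t y * |L y| ≤ gpdf m t y * (A + B * (y - ν) ^ 2) :=
        mul_le_mul_of_nonneg_left (hbound y) hg
    _ ≤ gpdf m t y * (|A| + |B| * (y - ν) ^ 2) := by
        refine mul_le_mul_of_nonneg_left (add_le_add (le_abs_self A) ?_) hg
        exact mul_le_mul_of_nonneg_right (le_abs_self B) (sq_nonneg _)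
    _ = |A| * gpdf m t y + |B| * (gpdf m t y * (y - ν) ^ 2) := by ring

lemma integrable_gpdf_mul_log_gpdf (ht : 0 < t) :
    Integrable fun y => gpdf m t y * Real.log (gpdf m t y) := by
  refine integrable_gpdf_mul ht ((continuous_gpdf.log
    (fun y => (gpdf_pos ht).ne')).aestronglyMeasurable) (|Real.log (Real.sqrt (2 * Real.pi * t))|)
    (1 / (2 * t)) m (fun y => ?_)
  rw [log_gpdf ht]
  calc |(-Real.log (Real.sqrt (2 * Real.pi * t)) - (y - m) ^ 2 / (2 * t))|
      ≤ |Real.log (Real.sqrt (2 * Real.pi * t))| + (y - m) ^ 2 / (2 * t) := by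
        refine (abs_sub _ _).trans ?_
        rw [abs_neg]
        gcongr
        rw [abs_of_nonneg (by positivity)]
    _ = |Real.log (Real.sqrt (2 * Real.pi * t))| + 1 / (2 * t) * (y - m) ^ 2 := by ring

lemma integral_gpdf_mul_log_gpdf (ht : 0 < t) :
    ∫ y, gpdf m t y * Real.log (gpdf m t y)
      = -Real.log (Real.sqrt (2 * Real.pi * t)) - 1 / 2 := by
  have h : (fun y => gpdf m t y * Real.log (gpdf m t y)) = fun y =>
      (-Real.log (Real.sqrt (2 * Real.pi * t))) * gpdf m t y -
        (1 / (2 * t)) * (gpdf m t y * (y - m) ^ 2) := by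
    funext y; rw [log_gpdf ht]; ring
  rw [h, MeasureTheory.integral_sub (((integrable_gpdf (m := m) ht)).const_mul _)
    ((integrable_gpdf_mul_sq_center (m := m) ht).const_mul _), MeasureTheory.integral_const_mul,
    MeasureTheory.integral_const_mul, integral_gpdf ht, integral_gpdf_mul_sq_center ht]
  field_simp

lemma gpdf_conv (c m y : ℝ) :
    ∫ x, gpdf 0 1 x * gpdf (m + c * x) 1 y = gpdf m (1 + c ^ 2) y := by
  have hσ : (0:ℝ) < 1 + c ^ 2 := by positivity
  have h2π : (0:ℝ) < 2 * Real.pi := by positivity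
  have heq : (fun x => gpdf 0 1 x * gpdf (m + c * x) 1 y) = fun x =>
      ((2 * Real.pi)⁻¹ * Real.exp (-(y - m) ^ 2 / (2 * (1 + c ^ 2)))) *
        ((fun z => Real.exp (-((1 + c ^ 2) / 2) * z ^ 2)) (x - c * (y - m) / (1 + c ^ 2))) := by
    funext x
    unfold gpdf
    simp only [mul_one]
    rw [show (√(2 * Real.pi))⁻¹ * Real.exp (-(x - 0) ^ 2 / 2) *
        ((√(2 * Real.pi))⁻¹ * Real.exp (-(y - (m + c * x)) ^ 2 / 2))
        = ((√(2 * Real.pi))⁻¹ * (√(2 * Real.pi))⁻¹) *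
          Real.exp (-(x - 0) ^ 2 / 2 + -(y - (m + c * x)) ^ 2 / 2) by
      rw [Real.exp_add]; ring]
    rw [← mul_inv, Real.mul_self_sqrt h2π.le]
    beta_reduce
    rw [mul_assoc, ← Real.exp_add]
    congr 1
    congr 1
    field_simp
    ring
  rw [heq, MeasureTheory.integral_const_mul, MeasureTheory.integral_sub_right_eq_self
    (fun z => Real.exp (-((1 + c ^ 2) / 2) * z ^ 2)) (c * (y - m) / (1 + c ^ 2)),
    integral_gaussian]
  unfold gpdf
  rw [show Real.pi / ((1 + c ^ 2) / 2) = 2 * Real.pi / (1 + c ^ 2) by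
      field_simp,
    Real.sqrt_div h2π.le, Real.sqrt_mul h2π.le]
  have hs : Real.sqrt (2 * Real.pi) * Real.sqrt (2 * Real.pi) = 2 * Real.pi :=
    Real.mul_self_sqrt h2π.le
  have h1 : Real.sqrt (2 * Real.pi) ≠ 0 := by positivity
  have h2 : Real.sqrt (1 + c ^ 2) ≠ 0 := by positivity
  field_simp
  have h2s : Real.sqrt 2 * Real.sqrt 2 = 2 := Real.mul_self_sqrt (by norm_num)
  have hps : Real.sqrt Real.pi * Real.sqrt Real.pi = Real.pi := Real.mul_self_sqrt Real.pi_pos.le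
  linear_combination hs

lemma inner_decomp (L : ℝ → ℝ) (hL : Continuous L) (A B ν : ℝ) (hB : 0 ≤ B)
    (hbound : ∀ y, |L y| ≤ A + B * (y - ν) ^ 2) (mm c : ℝ) :
    ∫ x, ∫ y, gpdf 0 1 x * gpdf (mm + c * x) 1 y * (Real.log (gpdf (mm + c * x) 1 y) - L y)
      = (-Real.log (Real.sqrt (2 * Real.pi)) - 1 / 2)
        - ∫ y, gpdf mm (1 + c ^ 2) y * L y := by
  have h1 : (0:ℝ) < 1 := one_pos
  have hA : 0 ≤ A := by
    have := hbound ν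
    simp only [sub_self] at this
    nlinarith [abs_nonneg (L ν)]
  set F : ℝ × ℝ → ℝ :=
    fun q => (gpdf 0 1 q.1 * gpdf (mm + c * q.1) 1 q.2) * L q.2 with hF_def
  have hgc2 : Continuous fun q : ℝ × ℝ => gpdf (mm + c * q.1) 1 q.2 := by
    unfold gpdf; fun_prop
  have hFc : Continuous F := by
    exact ((continuous_gpdf.comp continuous_fst).mul hgc2).mul (hL.comp continuous_snd)
  have hLint : ∀ m' : ℝ, Integrable fun y => gpdf m' 1 y * L y := fun m' =>
    integrable_gpdf_mul one_pos hL.aestronglyMeasurable A B ν hbound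
  have hLabs : ∀ m' : ℝ, Integrable fun y => gpdf m' 1 y * |L y| := fun m' =>
    integrable_gpdf_mul one_pos hL.abs.aestronglyMeasurable A B ν
      (fun y => by rw [abs_abs]; exact hbound y)
  have hRHSint : ∀ m' : ℝ, Integrable fun y => gpdf m' 1 y * (A + B * (y - ν) ^ 2) := by
    intro m'
    have : (fun y => gpdf m' 1 y * (A + B * (y - ν) ^ 2)) =
        fun y => A * gpdf m' 1 y + B * (gpdf m' 1 y * (y - ν) ^ 2) := by funext y; ring
    rw [this]
    exact ((integrable_gpdf (m := m') one_pos).const_mul A).add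
      ((integrable_gpdf_mul_sq (m := m') one_pos ν).const_mul B)
  -- bound on the inner integral of the norm
  have hinner_norm : ∀ x, ∫ y, ‖F (x, y)‖
      ≤ gpdf 0 1 x * (A + B * (1 + (mm + c * x - ν) ^ 2)) := by
    intro x
    have hg0 : 0 ≤ gpdf 0 1 x := (gpdf_pos one_pos).le
    have heqn : (fun y => ‖F (x, y)‖) =
        fun y => gpdf 0 1 x * (gpdf (mm + c * x) 1 y * |L y|) := by
      funext y
      simp only [hF_def, Real.norm_eq_abs, abs_mul,
        abs_of_nonneg hg0, abs_of_nonneg (gpdf_pos (t := 1) (m := mm + c * x) one_pos).le]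
      ring
    rw [heqn, MeasureTheory.integral_const_mul]
    have hle : ∫ y, gpdf (mm + c * x) 1 y * |L y|
        ≤ ∫ y, gpdf (mm + c * x) 1 y * (A + B * (y - ν) ^ 2) := by
      refine MeasureTheory.integral_mono (hLabs _) (hRHSint _) (fun y => ?_)
      exact mul_le_mul_of_nonneg_left (hbound y) (gpdf_pos one_pos).le
    have hval : ∫ y, gpdf (mm + c * x) 1 y * (A + B * (y - ν) ^ 2)
        = A + B * (1 + (mm + c * x - ν) ^ 2) := by
      have : (fun y => gpdf (mm + c * x) 1 y * (A + B * (y - ν) ^ 2)) =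
          fun y => A * gpdf (mm + c * x) 1 y + B * (gpdf (mm + c * x) 1 y * (y - ν) ^ 2) := by
        funext y; ring
      rw [this, MeasureTheory.integral_add ((integrable_gpdf one_pos).const_mul A)
        ((integrable_gpdf_mul_sq one_pos ν).const_mul B), MeasureTheory.integral_const_mul,
        MeasureTheory.integral_const_mul, integral_gpdf one_pos, integral_gpdf_mul_sq one_pos ν]
      ring
    calc gpdf 0 1 x * ∫ y, gpdf (mm + c * x) 1 y * |L y|
        ≤ gpdf 0 1 x * ∫ y, gpdf (mm + c * x) 1 y * (A + B * (y - ν) ^ 2) :=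
          mul_le_mul_of_nonneg_left hle hg0
      _ = gpdf 0 1 x * (A + B * (1 + (mm + c * x - ν) ^ 2)) := by rw [hval]
  -- integrability of the bounding function
  have hgbound_int : Integrable fun x => gpdf 0 1 x * (A + B * (1 + (mm + c * x - ν) ^ 2)) := by
    have : (fun x => gpdf 0 1 x * (A + B * (1 + (mm + c * x - ν) ^ 2))) =
        fun x => (A + B + B * (mm - ν) ^ 2) * gpdf 0 1 x +
          ((B * c ^ 2) * (gpdf 0 1 x * (x - 0) ^ 2) +
            (2 * B * c * (mm - ν)) * (gpdf 0 1 x * (x - 0))) := by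
      funext x; ring
    rw [this]
    exact ((integrable_gpdf one_pos).const_mul _).add
      (((integrable_gpdf_mul_sq one_pos 0).const_mul _).add
        ((integrable_gpdf_mul_center (m := (0:ℝ)) one_pos).const_mul _))
  -- product integrability of F
  have hFint : Integrable F (volume.prod volume) := by
    rw [MeasureTheory.integrable_prod_iff hFc.aestronglyMeasurable]
    constructor
    · refine Filter.Eventually.of_forall fun x => ?_
      have := (hLint (mm + c * x)).const_mul (gpdf 0 1 x)
      refine this.congr (Filter.Eventually.of_forall fun y => ?_)
      simp only [hF_def]; ring
    · refine Integrable.mono' hgbound_int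
        (hFc.aestronglyMeasurable.norm.integral_prod_right') ?_
      refine Filter.Eventually.of_forall fun x => ?_
      rw [Real.norm_eq_abs, abs_of_nonneg (MeasureTheory.integral_nonneg fun y => norm_nonneg _)]
      exact hinner_norm x
  -- compute inner integral for each x
  have hinner : ∀ x, ∫ y, gpdf 0 1 x * gpdf (mm + c * x) 1 y *
      (Real.log (gpdf (mm + c * x) 1 y) - L y)
      = gpdf 0 1 x * (-Real.log (Real.sqrt (2 * Real.pi)) - 1 / 2) - ∫ y, F (x, y) := by
    intro x
    have heqn : (fun y => gpdf 0 1 x * gpdf (mm + c * x) 1 y *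
        (Real.log (gpdf (mm + c * x) 1 y) - L y)) =
        fun y => gpdf 0 1 x * (gpdf (mm + c * x) 1 y * Real.log (gpdf (mm + c * x) 1 y)) -
          gpdf 0 1 x * (gpdf (mm + c * x) 1 y * L y) := by funext y; ring
    rw [heqn, MeasureTheory.integral_sub
      ((integrable_gpdf_mul_log_gpdf one_pos).const_mul _) ((hLint _).const_mul _),
      MeasureTheory.integral_const_mul, MeasureTheory.integral_const_mul,
      integral_gpdf_mul_log_gpdf one_pos]
    rw [mul_one (2 * Real.pi)]
    congr 1
    rw [← MeasureTheory.integral_const_mul]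
    congr 1
    funext y
    simp only [hF_def]
    ring
  calc ∫ x, ∫ y, gpdf 0 1 x * gpdf (mm + c * x) 1 y *
        (Real.log (gpdf (mm + c * x) 1 y) - L y)
      = ∫ x, (gpdf 0 1 x * (-Real.log (Real.sqrt (2 * Real.pi)) - 1 / 2) - ∫ y, F (x, y)) := by
        congr 1; funext x; exact hinner x
    _ = (∫ x, gpdf 0 1 x * (-Real.log (Real.sqrt (2 * Real.pi)) - 1 / 2))
        - ∫ x, ∫ y, F (x, y) := by
        exact MeasureTheory.integral_sub ((integrable_gpdf one_pos).mul_const _)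
          hFint.integral_prod_left
    _ = (-Real.log (Real.sqrt (2 * Real.pi)) - 1 / 2) - ∫ y, gpdf mm (1 + c ^ 2) y * L y := by
        congr 1
        · rw [MeasureTheory.integral_mul_const, integral_gpdf one_pos, one_mul]
        · rw [show (∫ x, ∫ y, F (x, y)) = ∫ y, ∫ x, F (x, y) from
            MeasureTheory.integral_integral_swap (by exact hFint)]
          congr 1
          funext y
          rw [show (fun x => F (x, y)) = fun x =>
            (gpdf 0 1 x * gpdf (mm + c * x) 1 y) * L y from rfl,
            MeasureTheory.integral_mul_const, gpdf_conv c mm y]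

lemma gpdf_le_inv_sqrt (ht : 0 < t) : gpdf m t y ≤ (Real.sqrt (2 * Real.pi * t))⁻¹ := by
  unfold gpdf
  have h1 : Real.exp (-(y - m) ^ 2 / (2 * t)) ≤ 1 := by
    rw [Real.exp_le_one_iff]
    have : 0 ≤ (y - m) ^ 2 / (2 * t) := by positivity
    rw [neg_div]
    linarith
  calc (Real.sqrt (2 * Real.pi * t))⁻¹ * Real.exp (-(y - m) ^ 2 / (2 * t))
      ≤ (Real.sqrt (2 * Real.pi * t))⁻¹ * 1 :=
        mul_le_mul_of_nonneg_left h1 (by positivity)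
    _ = _ := mul_one _

lemma log_sum_gpdf_bound {ι : Type*} [Fintype ι] (p₁ : ι → ℝ) (hp : ∀ i, 0 < p₁ i)
    (hsum : ∑ i, p₁ i = 1) (μv : ι → ℝ) {σ : ℝ} (hσ : 0 < σ) (i₀ : ι) (y : ℝ) :
    |Real.log (∑ i, p₁ i * gpdf (μv i) σ y)|
      ≤ (|Real.log (Real.sqrt (2 * Real.pi * σ))| + |Real.log (p₁ i₀)|)
        + (1 / (2 * σ)) * (y - μv i₀) ^ 2 := by
  set S := ∑ i, p₁ i * gpdf (μv i) σ y with hS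
  have hterm : ∀ i, 0 < p₁ i * gpdf (μv i) σ y := fun i =>
    mul_pos (hp i) (gpdf_pos hσ)
  have hS_pos : 0 < S := Finset.sum_pos (fun i _ => hterm i) ⟨i₀, Finset.mem_univ i₀⟩
  have hupper : S ≤ (Real.sqrt (2 * Real.pi * σ))⁻¹ := by
    calc S ≤ ∑ i, p₁ i * (Real.sqrt (2 * Real.pi * σ))⁻¹ :=
          Finset.sum_le_sum fun i _ =>
            mul_le_mul_of_nonneg_left (gpdf_le_inv_sqrt hσ) (hp i).le
      _ = (Real.sqrt (2 * Real.pi * σ))⁻¹ := by rw [← Finset.sum_mul, hsum, one_mul]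
  have hlog_up : Real.log S ≤ -Real.log (Real.sqrt (2 * Real.pi * σ)) := by
    rw [← Real.log_inv]
    exact Real.log_le_log hS_pos hupper
  have hlow : p₁ i₀ * gpdf (μv i₀) σ y ≤ S :=
    Finset.single_le_sum (fun i _ => (hterm i).le) (Finset.mem_univ i₀)
  have hlog_low : Real.log (p₁ i₀) + (-Real.log (Real.sqrt (2 * Real.pi * σ)) -
      (y - μv i₀) ^ 2 / (2 * σ)) ≤ Real.log S := by
    have := Real.log_le_log (hterm i₀) hlow
    rwa [Real.log_mul (hp i₀).ne' (gpdf_pos hσ).ne', log_gpdf hσ] at this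
  have hq : (y - μv i₀) ^ 2 / (2 * σ) = (1 / (2 * σ)) * (y - μv i₀) ^ 2 := by ring
  rw [abs_le]
  constructor
  · have h1 := neg_abs_le (Real.log (p₁ i₀))
    have h2 := le_abs_self (Real.log (Real.sqrt (2 * Real.pi * σ)))
    rw [hq] at hlog_low
    linarith
  · have h2 := le_abs_self (-Real.log (Real.sqrt (2 * Real.pi * σ)))
    rw [abs_neg] at h2
    have h3 : 0 ≤ (1 / (2 * σ)) * (y - μv i₀) ^ 2 := by positivity
    have h4 : 0 ≤ |Real.log (p₁ i₀)| := abs_nonneg _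
    linarith

lemma gpdf_zero_shift (m y : ℝ) : gpdf 0 1 (y - m) = gpdf m 1 y := by
  unfold gpdf
  congr 1
  ring


end AuxGaussian

/-- Mixed-inputs decomposition (paper's equation (56), real-valued convention): with user 1's
input finite-alphabet and user 2's input standard Gaussian, the sum mutual information equals
the interference-as-noise mutual information of the arbitrary input plus the closed-form
Gaussian conditional rate `(1/2)·log(1 + snr·b²·g₂²)`. -/
theorem stmt_12 {ι : Type*} [Fintype ι]
    (v : ι → ℝ) (p₁ : ι → ℝ) (hp₁pos : ∀ i, 0 < p₁ i) (hp₁sum : ∑ i, p₁ i = 1)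
    (snr a b g₁ g₂ : ℝ) (hsnr : 0 < snr) (hg₁ : 0 ≤ g₁) (hg₂ : 0 ≤ g₂)
    (φ : ℝ → ℝ) (hφ : φ = fun t => (Real.sqrt (2 * Real.pi))⁻¹ * Real.exp (-t ^ 2 / 2))
    (pyx₁ : ℝ → ι → ℝ)
    (hpyx₁ : pyx₁ = fun y i =>
        (Real.sqrt (2 * Real.pi * (1 + snr * b ^ 2 * g₂ ^ 2)))⁻¹ *
          Real.exp (-(y - Real.sqrt snr * a * g₁ * v i) ^ 2 /
            (2 * (1 + snr * b ^ 2 * g₂ ^ 2))))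
    (py : ℝ → ℝ) (hpy : py = fun y => ∑ i, p₁ i * pyx₁ y i)
    (Ijoint : ℝ)
    (hIjoint : Ijoint = ∑ i, p₁ i * ∫ x₂ : ℝ, ∫ y : ℝ,
        φ x₂ * φ (y - Real.sqrt snr * (a * g₁ * v i + b * g₂ * x₂)) *
          Real.log (φ (y - Real.sqrt snr * (a * g₁ * v i + b * g₂ * x₂)) / py y))
    (I₁ : ℝ)
    (hI₁ : I₁ = ∫ y : ℝ, ∑ i, p₁ i * pyx₁ y i * Real.log (pyx₁ y i / py y)) :
    Ijoint = I₁ + (1 / 2) * Real.log (1 + snr * b ^ 2 * g₂ ^ 2) := by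
  -- notation
  set σ : ℝ := 1 + snr * b ^ 2 * g₂ ^ 2 with hσdef
  set c : ℝ := Real.sqrt snr * b * g₂ with hcdef
  set μv : ι → ℝ := fun i => Real.sqrt snr * a * g₁ * v i with hμdef
  have hσ : 0 < σ := by positivity
  have hc2 : σ = 1 + c ^ 2 := by
    rw [hσdef, hcdef, mul_pow, mul_pow, Real.sq_sqrt hsnr.le]
  -- identify densities
  have hφg : φ = gpdf 0 1 := by
    rw [hφ]; funext u; unfold gpdf
    rw [mul_one]
    congr 1
    ring
  have hpyx : pyx₁ = fun y i => gpdf (μv i) σ y := by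
    rw [hpyx₁]; rfl
  have hpyg : py = fun y => ∑ i, p₁ i * gpdf (μv i) σ y := by
    rw [hpy, hpyx]
  have hne : Nonempty ι := by
    rcases isEmpty_or_nonempty ι with h | h
    · exact absurd hp₁sum (by simp)
    · exact h
  have hpy_pos : ∀ y, 0 < py y := by
    intro y
    rw [hpyg]
    exact Finset.sum_pos (fun i _ => mul_pos (hp₁pos i) (gpdf_pos hσ)) ⟨Classical.arbitrary ι,
      Finset.mem_univ _⟩
  obtain ⟨i₀⟩ := hne
  have hpy_cont : Continuous py := by
    rw [hpyg]
    exact continuous_finset_sum _ fun i _ => continuous_const.mul continuous_gpdf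
  set L : ℝ → ℝ := fun y => Real.log (py y) with hLdef
  have hLc : Continuous L := hpy_cont.log fun y => (hpy_pos y).ne'
  set A : ℝ := |Real.log (Real.sqrt (2 * Real.pi * σ))| + |Real.log (p₁ i₀)| with hAdef
  set B : ℝ := 1 / (2 * σ) with hBdef
  have hB : 0 ≤ B := by positivity
  have hbound : ∀ y, |L y| ≤ A + B * (y - μv i₀) ^ 2 := by
    intro y
    rw [hLdef, hpyg]
    exact log_sum_gpdf_bound p₁ hp₁pos hp₁sum μv hσ i₀ y
  set T : ι → ℝ := fun i => ∫ y, gpdf (μv i) σ y * L y with hTdef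
  -- joint term, per index
  have hIj_i : ∀ i, (∫ x₂ : ℝ, ∫ y : ℝ,
      φ x₂ * φ (y - Real.sqrt snr * (a * g₁ * v i + b * g₂ * x₂)) *
        Real.log (φ (y - Real.sqrt snr * (a * g₁ * v i + b * g₂ * x₂)) / py y))
      = (-Real.log (Real.sqrt (2 * Real.pi)) - 1 / 2) - T i := by
    intro i
    have hcongr : (fun x₂ => ∫ y : ℝ,
        φ x₂ * φ (y - Real.sqrt snr * (a * g₁ * v i + b * g₂ * x₂)) *
          Real.log (φ (y - Real.sqrt snr * (a * g₁ * v i + b * g₂ * x₂)) / py y))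
        = fun x₂ => ∫ y : ℝ, gpdf 0 1 x₂ * gpdf (μv i + c * x₂) 1 y *
            (Real.log (gpdf (μv i + c * x₂) 1 y) - L y) := by
      funext x₂
      congr 1
      funext y
      have harg : Real.sqrt snr * (a * g₁ * v i + b * g₂ * x₂) = μv i + c * x₂ := by
        rw [hμdef, hcdef]; ring
      rw [harg, hφg, gpdf_zero_shift, Real.log_div (gpdf_pos one_pos).ne' (hpy_pos y).ne']
    rw [hcongr, inner_decomp L hLc A B (μv i₀) hB hbound (μv i) c, ← hc2]
  have hIjoint' : Ijoint = ∑ i, p₁ i *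
      ((-Real.log (Real.sqrt (2 * Real.pi)) - 1 / 2) - T i) := by
    rw [hIjoint]
    exact Finset.sum_congr rfl fun i _ => by rw [hIj_i i]
  -- single-user term
  have hfi_int : ∀ i, Integrable fun y =>
      p₁ i * pyx₁ y i * Real.log (pyx₁ y i / py y) := by
    intro i
    have heqn : (fun y => p₁ i * pyx₁ y i * Real.log (pyx₁ y i / py y))
        = fun y => p₁ i * (gpdf (μv i) σ y * Real.log (gpdf (μv i) σ y)
            - gpdf (μv i) σ y * L y) := by
      funext y
      rw [hpyx]
      simp only
      rw [Real.log_div (gpdf_pos hσ).ne' (hpy_pos y).ne']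
      ring
    rw [heqn]
    exact ((integrable_gpdf_mul_log_gpdf hσ).sub
      (integrable_gpdf_mul hσ hLc.aestronglyMeasurable A B (μv i₀) hbound)).const_mul _
  have hI1_i : ∀ i, (∫ y, p₁ i * pyx₁ y i * Real.log (pyx₁ y i / py y))
      = p₁ i * ((-Real.log (Real.sqrt (2 * Real.pi * σ)) - 1 / 2) - T i) := by
    intro i
    have heqn : (fun y => p₁ i * pyx₁ y i * Real.log (pyx₁ y i / py y))
        = fun y => p₁ i * (gpdf (μv i) σ y * Real.log (gpdf (μv i) σ y))
            - p₁ i * (gpdf (μv i) σ y * L y) := by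
      funext y
      rw [hpyx]
      simp only
      rw [Real.log_div (gpdf_pos hσ).ne' (hpy_pos y).ne']
      ring
    rw [heqn, MeasureTheory.integral_sub
      ((integrable_gpdf_mul_log_gpdf hσ).const_mul _)
      ((integrable_gpdf_mul hσ hLc.aestronglyMeasurable A B (μv i₀) hbound).const_mul _),
      MeasureTheory.integral_const_mul, MeasureTheory.integral_const_mul,
      integral_gpdf_mul_log_gpdf hσ, hTdef]
    ring
  have hI₁' : I₁ = ∑ i, p₁ i *
      ((-Real.log (Real.sqrt (2 * Real.pi * σ)) - 1 / 2) - T i) := by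
    rw [hI₁, MeasureTheory.integral_finset_sum _ fun i _ => hfi_int i]
    exact Finset.sum_congr rfl fun i _ => hI1_i i
  -- final algebra
  have hdiff : -Real.log (Real.sqrt (2 * Real.pi)) -
      (-Real.log (Real.sqrt (2 * Real.pi * σ))) = (1 / 2) * Real.log σ := by
    rw [Real.log_sqrt (by positivity), Real.log_sqrt (by positivity),
      Real.log_mul (by positivity) hσ.ne']
    ring
  rw [hIjoint', hI₁']
  have hsplit : ∑ i, p₁ i * ((-Real.log (Real.sqrt (2 * Real.pi)) - 1 / 2) - T i)
      = (∑ i, p₁ i * ((-Real.log (Real.sqrt (2 * Real.pi * σ)) - 1 / 2) - T i))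
        + (∑ i, p₁ i) * ((1 / 2) * Real.log σ) := by
    rw [Finset.sum_mul, ← Finset.sum_add_distrib]
    refine Finset.sum_congr rfl fun i _ => ?_
    rw [← hdiff]
    ring
  rw [hsplit, hp₁sum, one_mul]
end

section
/- Let x₁ and x₂ be independent random variables uniform on {−1,+1}, let n be a standard real Gaussian independent of (x₁,x₂), and for snr > 0 put y = √snr·(x₁ + x₂) + n. With φ the standard normal density, p_y(y) = (1/4)·Σ_{x₁,x₂∈{−1,1}} φ(y − √snr(x₁+x₂)), define I(snr) = ∫ (1/4)·Σ_{x₁,x₂} φ(y − √snr(x₁+x₂))·log(φ(y − √snr(x₁+x₂))/p_y(y)) dy. Then I(snr) → (3/2)·log 2 as snr → ∞. -/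
open MeasureTheory Finset Filter

namespace Stmt15Aux

noncomputable def NP : ℝ → ℝ := fun t => (Real.sqrt (2 * Real.pi))⁻¹ * Real.exp (-t ^ 2 / 2)

noncomputable def rr (a c y : ℝ) : ℝ :=
  Real.exp (-((c + 2) * a) * y - ((c + 2) * a) ^ 2 / 2)
    + 2 * Real.exp (-(c * a) * y - (c * a) ^ 2 / 2)
    + Real.exp (-((c - 2) * a) * y - ((c - 2) * a) ^ 2 / 2)

noncomputable def G (a c : ℝ) : ℝ → ℝ := fun u => NP u * Real.log (4 / rr a c u)

noncomputable def AA (a c : ℝ) : ℝ := ∫ y, G a c y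

lemma NP_apply (t : ℝ) : (Real.sqrt (2 * Real.pi))⁻¹ * Real.exp (-t ^ 2 / 2) = NP t := rfl

lemma NP_pos (t : ℝ) : 0 < NP t := by
  have h : 0 < Real.sqrt (2 * Real.pi) := Real.sqrt_pos.2 (by positivity)
  exact mul_pos (inv_pos.2 h) (Real.exp_pos _)

lemma NP_cont : Continuous NP := by unfold NP; fun_prop

lemma NP_shift (y e : ℝ) : NP (y + e) = NP y * Real.exp (-e * y - e ^ 2 / 2) := by
  unfold NP
  rw [mul_assoc, ← Real.exp_add]
  ring_nf

lemma NP_integral : ∫ y, NP y = 1 := by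
  unfold NP
  have h : ∀ y : ℝ, (-y ^ 2 / 2 : ℝ) = -(1/2 : ℝ) * y ^ 2 := fun y => by ring
  simp_rw [h]
  rw [MeasureTheory.integral_const_mul, integral_gaussian,
    show (Real.pi / (1/2 : ℝ)) = 2 * Real.pi by ring]
  exact inv_mul_cancel₀ (ne_of_gt (Real.sqrt_pos.2 (by positivity)))

lemma rr_pos (a c y : ℝ) : 0 < rr a c y := by unfold rr; positivity

lemma rr_cont (a c : ℝ) : Continuous (rr a c) := by unfold rr; fun_prop

lemma exp_term_le (d y : ℝ) : Real.exp (-d * y - d ^ 2 / 2) ≤ Real.exp (y ^ 2 / 2) :=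
  Real.exp_le_exp.2 (by nlinarith [sq_nonneg (y + d)])

lemma rr_le (a c y : ℝ) : rr a c y ≤ 4 * Real.exp (y ^ 2 / 2) := by
  have h1 := exp_term_le ((c + 2) * a) y
  have h2 := exp_term_le (c * a) y
  have h3 := exp_term_le ((c - 2) * a) y
  unfold rr
  linarith

lemma rr_ge (a c y : ℝ) (hc : c = -2 ∨ c = 0 ∨ c = 2) : 1 ≤ rr a c y := by
  have e1 := Real.exp_pos (-((c + 2) * a) * y - ((c + 2) * a) ^ 2 / 2)
  have e2 := Real.exp_pos (-(c * a) * y - (c * a) ^ 2 / 2)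
  have e3 := Real.exp_pos (-((c - 2) * a) * y - ((c - 2) * a) ^ 2 / 2)
  rcases hc with h | h | h <;> subst h <;> unfold rr
  · have h1 : Real.exp (-(((-2:ℝ) + 2) * a) * y - (((-2:ℝ) + 2) * a) ^ 2 / 2) = 1 := by norm_num
    linarith
  · have h1 : Real.exp (-((0:ℝ) * a) * y - ((0:ℝ) * a) ^ 2 / 2) = 1 := by norm_num
    linarith
  · have h1 : Real.exp (-(((2:ℝ) - 2) * a) * y - (((2:ℝ) - 2) * a) ^ 2 / 2) = 1 := by norm_num
    linarith

lemma bound_le (y : ℝ) : NP y * (Real.log 4 + y ^ 2 / 2)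
    ≤ (Real.sqrt (2 * Real.pi))⁻¹ * (Real.log 4 + 2) * Real.exp (-(1/4 : ℝ) * y ^ 2) := by
  unfold NP
  have h1 : (0:ℝ) ≤ Real.log 4 := Real.log_nonneg (by norm_num)
  have h2 : 1 + y ^ 2 / 4 ≤ Real.exp (y ^ 2 / 4) := by
    have := Real.add_one_le_exp (y ^ 2 / 4); linarith
  have h3 : Real.exp (-y ^ 2 / 2) * Real.exp (y ^ 2 / 4) = Real.exp (-(1/4 : ℝ) * y ^ 2) := by
    rw [← Real.exp_add]; ring_nf
  have he : (0:ℝ) < Real.exp (-y ^ 2 / 2) := Real.exp_pos _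
  have hs : (0:ℝ) ≤ (Real.sqrt (2 * Real.pi))⁻¹ := by positivity
  have key : Real.exp (-y ^ 2 / 2) * (Real.log 4 + y ^ 2 / 2)
      ≤ (Real.log 4 + 2) * Real.exp (-(1/4 : ℝ) * y ^ 2) := by
    rw [← h3]
    nlinarith [mul_le_mul_of_nonneg_left h2 (mul_nonneg (by linarith : (0:ℝ) ≤ Real.log 4 + 2) he.le),
      mul_nonneg (mul_nonneg h1 (sq_nonneg y)) he.le, sq_nonneg y,
      mul_nonneg (sq_nonneg y) he.le]
  calc (Real.sqrt (2 * Real.pi))⁻¹ * Real.exp (-y ^ 2 / 2) * (Real.log 4 + y ^ 2 / 2)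
      = (Real.sqrt (2 * Real.pi))⁻¹ * (Real.exp (-y ^ 2 / 2) * (Real.log 4 + y ^ 2 / 2)) := by ring
    _ ≤ (Real.sqrt (2 * Real.pi))⁻¹ * ((Real.log 4 + 2) * Real.exp (-(1/4 : ℝ) * y ^ 2)) :=
        mul_le_mul_of_nonneg_left key hs
    _ = (Real.sqrt (2 * Real.pi))⁻¹ * (Real.log 4 + 2) * Real.exp (-(1/4 : ℝ) * y ^ 2) := by ring

lemma bound_integrable :
    Integrable (fun y : ℝ => (Real.sqrt (2 * Real.pi))⁻¹ * (Real.log 4 + 2)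
      * Real.exp (-(1/4 : ℝ) * y ^ 2)) := by
  have := (integrable_exp_neg_mul_sq (by norm_num : (0:ℝ) < 1/4)).const_mul
    ((Real.sqrt (2 * Real.pi))⁻¹ * (Real.log 4 + 2))
  simpa [mul_assoc] using this

lemma G_norm_le (a c y : ℝ) (hge : 1 ≤ rr a c y) :
    ‖G a c y‖ ≤ (Real.sqrt (2 * Real.pi))⁻¹ * (Real.log 4 + 2)
      * Real.exp (-(1/4 : ℝ) * y ^ 2) := by
  have hrp : 0 < rr a c y := rr_pos a c y
  have hub := rr_le a c y
  have hl4 : (0:ℝ) ≤ Real.log 4 := Real.log_nonneg (by norm_num)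
  have h1 : |Real.log (4 / rr a c y)| ≤ Real.log 4 + y ^ 2 / 2 := by
    rw [abs_le]
    constructor
    · rw [Real.log_div (by norm_num) (ne_of_gt hrp)]
      have hlr : Real.log (rr a c y) ≤ Real.log (4 * Real.exp (y ^ 2 / 2)) :=
        Real.log_le_log hrp hub
      rw [Real.log_mul (by norm_num) (ne_of_gt (Real.exp_pos _)), Real.log_exp] at hlr
      linarith
    · have hd : 4 / rr a c y ≤ 4 := by
        rw [div_le_iff₀ hrp]; nlinarith
      have h4 : Real.log (4 / rr a c y) ≤ Real.log 4 :=
        Real.log_le_log (by positivity) hd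
      nlinarith [sq_nonneg y]
  calc ‖G a c y‖ = NP y * |Real.log (4 / rr a c y)| := by
        rw [G, Real.norm_eq_abs, abs_mul, abs_of_pos (NP_pos y)]
    _ ≤ NP y * (Real.log 4 + y ^ 2 / 2) := mul_le_mul_of_nonneg_left h1 (NP_pos y).le
    _ ≤ _ := bound_le y

lemma G_aesm (a c : ℝ) (hge : ∀ y, 1 ≤ rr a c y) :
    AEStronglyMeasurable (G a c) volume := by
  apply Continuous.aestronglyMeasurable
  unfold G
  apply NP_cont.mul
  apply Continuous.log
  · exact continuous_const.div (rr_cont a c) fun y => (rr_pos a c y).ne'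
  · intro y
    exact (div_pos (by norm_num) (rr_pos a c y)).ne'

lemma G_integrable (a c : ℝ) (hge : ∀ y, 1 ≤ rr a c y) : Integrable (G a c) := by
  apply Integrable.mono' bound_integrable (G_aesm a c hge)
  exact MeasureTheory.ae_of_all _ fun y => G_norm_le a c y (hge y)

lemma exp_term_tendsto (d y : ℝ) (hd : d ≠ 0) :
    Tendsto (fun a => Real.exp (-(d * a) * y - (d * a) ^ 2 / 2)) atTop (nhds 0) := by
  have h : Tendsto (fun a : ℝ => -(d * a) * y - (d * a) ^ 2 / 2) atTop atBot := by
    apply tendsto_atBot_mono' atTop _ tendsto_neg_atTop_atBot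
    filter_upwards [eventually_ge_atTop (max 1 (2 * (|d| * |y| + 1) / d ^ 2))] with a ha
    have ha1 : (1:ℝ) ≤ a := le_trans (le_max_left _ _) ha
    have ha2 : 2 * (|d| * |y| + 1) / d ^ 2 ≤ a := le_trans (le_max_right _ _) ha
    have hd2 : (0:ℝ) < d ^ 2 := by positivity
    have h1 : -(d * a) * y ≤ |d| * |y| * a := by
      calc -(d * a) * y ≤ |(-(d * a) * y)| := le_abs_self _
        _ = |d| * a * |y| := by
            rw [abs_mul, abs_neg, abs_mul, abs_of_nonneg (by linarith : (0:ℝ) ≤ a)]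
        _ = |d| * |y| * a := by ring
    have h2 : 2 * (|d| * |y| + 1) ≤ d ^ 2 * a := by
      rw [div_le_iff₀ hd2] at ha2; linarith
    have h3 : 2 * (|d| * |y| + 1) * a ≤ d ^ 2 * a * a :=
      mul_le_mul_of_nonneg_right h2 (by linarith)
    nlinarith [abs_nonneg d, abs_nonneg y]
  exact Real.tendsto_exp_atBot.comp h

lemma rr_tendsto_m2 (y : ℝ) : Tendsto (fun a => rr a (-2) y) atTop (nhds 1) := by
  have t2 := exp_term_tendsto (-2) y (by norm_num)
  have t3 := exp_term_tendsto ((-2:ℝ) - 2) y (by norm_num)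
  have base : Tendsto (fun a : ℝ => (1:ℝ)
      + 2 * Real.exp (-((-2:ℝ) * a) * y - ((-2:ℝ) * a) ^ 2 / 2)
      + Real.exp (-(((-2:ℝ) - 2) * a) * y - (((-2:ℝ) - 2) * a) ^ 2 / 2)) atTop
      (nhds (1 + 2 * 0 + 0)) := (tendsto_const_nhds.add (t2.const_mul 2)).add t3
  rw [show (1:ℝ) + 2 * 0 + 0 = 1 by norm_num] at base
  apply base.congr
  intro a
  have h0 : Real.exp (-(((-2:ℝ) + 2) * a) * y - (((-2:ℝ) + 2) * a) ^ 2 / 2) = 1 := by norm_num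
  unfold rr
  rw [h0]

lemma rr_tendsto_0 (y : ℝ) : Tendsto (fun a => rr a 0 y) atTop (nhds 2) := by
  have t1 := exp_term_tendsto ((0:ℝ) + 2) y (by norm_num)
  have t3 := exp_term_tendsto ((0:ℝ) - 2) y (by norm_num)
  have base : Tendsto (fun a : ℝ =>
      Real.exp (-(((0:ℝ) + 2) * a) * y - (((0:ℝ) + 2) * a) ^ 2 / 2) + (2:ℝ)
      + Real.exp (-(((0:ℝ) - 2) * a) * y - (((0:ℝ) - 2) * a) ^ 2 / 2)) atTop
      (nhds (0 + 2 + 0)) := (t1.add tendsto_const_nhds).add t3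
  rw [show (0:ℝ) + 2 + 0 = 2 by norm_num] at base
  apply base.congr
  intro a
  have h0 : Real.exp (-((0:ℝ) * a) * y - ((0:ℝ) * a) ^ 2 / 2) = 1 := by norm_num
  unfold rr
  rw [h0]
  ring

lemma rr_tendsto_p2 (y : ℝ) : Tendsto (fun a => rr a 2 y) atTop (nhds 1) := by
  have t1 := exp_term_tendsto ((2:ℝ) + 2) y (by norm_num)
  have t2 := exp_term_tendsto (2:ℝ) y (by norm_num)
  have base : Tendsto (fun a : ℝ =>
      Real.exp (-(((2:ℝ) + 2) * a) * y - (((2:ℝ) + 2) * a) ^ 2 / 2)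
      + 2 * Real.exp (-((2:ℝ) * a) * y - ((2:ℝ) * a) ^ 2 / 2) + (1:ℝ)) atTop
      (nhds (0 + 2 * 0 + 1)) := (t1.add (t2.const_mul 2)).add tendsto_const_nhds
  rw [show (0:ℝ) + 2 * 0 + 1 = 1 by norm_num] at base
  apply base.congr
  intro a
  have h0 : Real.exp (-(((2:ℝ) - 2) * a) * y - (((2:ℝ) - 2) * a) ^ 2 / 2) = 1 := by norm_num
  unfold rr
  rw [h0]

lemma tendsto_AA (c m : ℝ) (hm : 1 ≤ m)
    (hge : ∀ a y, 1 ≤ rr a c y)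
    (hlim : ∀ y, Tendsto (fun a => rr a c y) atTop (nhds m)) :
    Tendsto (fun a => AA a c) atTop (nhds (Real.log (4 / m))) := by
  have hm0 : (0:ℝ) < m := lt_of_lt_of_le one_pos hm
  have key := MeasureTheory.tendsto_integral_filter_of_dominated_convergence
    (μ := (volume : Measure ℝ)) (l := (atTop : Filter ℝ))
    (F := fun a => G a c) (f := fun y => NP y * Real.log (4 / m))
    (bound := fun y => (Real.sqrt (2 * Real.pi))⁻¹ * (Real.log 4 + 2)
      * Real.exp (-(1/4 : ℝ) * y ^ 2))
    (Eventually.of_forall fun a => G_aesm a c (hge a))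
    (Eventually.of_forall fun a =>
      MeasureTheory.ae_of_all _ fun y => G_norm_le a c y (hge a y))
    bound_integrable
    (MeasureTheory.ae_of_all _ fun y => by
      have : Tendsto (fun a => (4:ℝ) / rr a c y) atTop (nhds (4 / m)) :=
        tendsto_const_nhds.div (hlim y) hm0.ne'
      exact (this.log (by positivity)).const_mul (NP y))
  have hval : ∫ y, NP y * Real.log (4 / m) = Real.log (4 / m) := by
    rw [MeasureTheory.integral_mul_const, NP_integral, one_mul]
  rw [hval] at key
  exact key

lemma T_shift (a c u : ℝ) :
    NP (u + (c + 2) * a) + 2 * NP (u + c * a) + NP (u + (c - 2) * a) = NP u * rr a c u := by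
  rw [NP_shift u ((c + 2) * a), NP_shift u (c * a), NP_shift u ((c - 2) * a)]
  unfold rr
  ring

lemma term_eq (a c y u : ℝ) (hu : u = y - c * a) :
    NP u * Real.log (NP u / ((1/4 : ℝ) * (NP (y + 2 * a) + 2 * NP y + NP (y - 2 * a))))
      = G a c u := by
  subst hu
  have hT := T_shift a c (y - c * a)
  rw [show y - c * a + (c + 2) * a = y + 2 * a by ring,
      show y - c * a + c * a = y by ring,
      show y - c * a + (c - 2) * a = y - 2 * a by ring] at hT
  rw [hT]
  unfold G
  congr 2
  rw [div_eq_div_iff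
    (mul_pos (by norm_num : (0:ℝ) < 1/4) (mul_pos (NP_pos _) (rr_pos a c _))).ne'
    (rr_pos a c _).ne']
  ring

lemma integrand_eq (a y : ℝ) :
    (1/4 : ℝ) * ∑ s₁ ∈ ({-1, 1} : Finset ℝ), ∑ s₂ ∈ ({-1, 1} : Finset ℝ),
        NP (y - a * (s₁ + s₂)) * Real.log (NP (y - a * (s₁ + s₂)) /
          ((1/4 : ℝ) * ∑ t₁ ∈ ({-1, 1} : Finset ℝ), ∑ t₂ ∈ ({-1, 1} : Finset ℝ),
            NP (y - a * (t₁ + t₂))))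
      = (1/4 : ℝ) * (G a (-2) (y + 2 * a) + 2 * G a 0 y + G a 2 (y - 2 * a)) := by
  have hpair : ∀ f : ℝ → ℝ, ∑ s ∈ ({-1, 1} : Finset ℝ), f s = f (-1) + f 1 := fun f =>
    Finset.sum_pair (by norm_num)
  simp only [hpair]
  rw [show y - a * (-1 + -1) = y + 2 * a by ring,
      show y - a * (-1 + 1) = y by ring,
      show y - a * (1 + -1) = y by ring,
      show y - a * (1 + 1) = y - 2 * a by ring,
      show NP (y + 2 * a) + NP y + (NP y + NP (y - 2 * a))
          = NP (y + 2 * a) + 2 * NP y + NP (y - 2 * a) by ring]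
  rw [term_eq a (-2) y (y + 2 * a) (by ring), term_eq a 0 y y (by ring),
      term_eq a 2 y (y - 2 * a) (by ring)]
  ring

lemma sqrt_tendsto_atTop : Tendsto Real.sqrt atTop atTop := by
  rw [tendsto_atTop_atTop]
  intro b
  refine ⟨(max b 0) ^ 2, fun a ha => ?_⟩
  have h := Real.sqrt_le_sqrt ha
  rw [Real.sqrt_sq (le_max_right b 0)] at h
  exact le_trans (le_max_left b 0) h

end Stmt15Aux

open Stmt15Aux in
/-- BPSK rate-loss observation of the paper: with both users sending equiprobable `±1` over unit
channel gains and equal powers, the sum mutual information of the two-user Gaussian MAC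
saturates at `H(x₁+x₂) = (3/2)·log 2` (1.5 bits) as `snr → ∞`. -/
theorem stmt_15
    (φ : ℝ → ℝ) (hφ : φ = fun t => (Real.sqrt (2 * Real.pi))⁻¹ * Real.exp (-t ^ 2 / 2))
    (py : ℝ → ℝ → ℝ)
    (hpy : py = fun snr y => (1 / 4) * ∑ s₁ ∈ ({-1, 1} : Finset ℝ),
        ∑ s₂ ∈ ({-1, 1} : Finset ℝ), φ (y - Real.sqrt snr * (s₁ + s₂)))
    (I : ℝ → ℝ)
    (hI : I = fun snr => ∫ y : ℝ, (1 / 4) * ∑ s₁ ∈ ({-1, 1} : Finset ℝ),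
        ∑ s₂ ∈ ({-1, 1} : Finset ℝ), φ (y - Real.sqrt snr * (s₁ + s₂)) *
          Real.log (φ (y - Real.sqrt snr * (s₁ + s₂)) / py snr y)) :
    Tendsto I atTop (nhds ((3 / 2) * Real.log 2)) := by
  have hφ' : φ = NP := by rw [hφ]; rfl
  have hgem2 : ∀ a y, 1 ≤ rr a (-2) y := fun a y => rr_ge a (-2) y (Or.inl rfl)
  have hge0 : ∀ a y, 1 ≤ rr a 0 y := fun a y => rr_ge a 0 y (Or.inr (Or.inl rfl))
  have hgep2 : ∀ a y, 1 ≤ rr a 2 y := fun a y => rr_ge a 2 y (Or.inr (Or.inr rfl))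
  have hIeq : ∀ snr : ℝ, I snr = (1/4 : ℝ) * (AA (Real.sqrt snr) (-2)
      + 2 * AA (Real.sqrt snr) 0 + AA (Real.sqrt snr) 2) := by
    intro snr
    set a := Real.sqrt snr with ha
    have hint : I snr = ∫ y : ℝ,
        (1/4 : ℝ) * (G a (-2) (y + 2 * a) + 2 * G a 0 y + G a 2 (y - 2 * a)) := by
      rw [hI]
      apply MeasureTheory.integral_congr_ae
      apply MeasureTheory.ae_of_all
      intro y
      simp only [hpy, hφ']
      exact integrand_eq a y
    have i1 : Integrable (fun y : ℝ => G a (-2) (y + 2 * a)) :=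
      (G_integrable a (-2) (hgem2 a)).comp_add_right (2 * a)
    have i2 : Integrable (fun y : ℝ => 2 * G a 0 y) :=
      (G_integrable a 0 (hge0 a)).const_mul 2
    have i3 : Integrable (fun y : ℝ => G a 2 (y - 2 * a)) :=
      (G_integrable a 2 (hgep2 a)).comp_sub_right (2 * a)
    have i12 : Integrable (fun y : ℝ => G a (-2) (y + 2 * a) + 2 * G a 0 y) := i1.add i2
    rw [hint, MeasureTheory.integral_const_mul]
    congr 1
    rw [integral_add i12 i3, integral_add i1 i2,
      MeasureTheory.integral_add_right_eq_self (G a (-2)) (2 * a),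
      MeasureTheory.integral_sub_right_eq_self (G a 2) (2 * a),
      MeasureTheory.integral_const_mul]
    rfl
  have hm2 : Tendsto (fun a => AA a (-2)) atTop (nhds (Real.log (4 / 1))) :=
    tendsto_AA (-2) 1 le_rfl hgem2 rr_tendsto_m2
  have h0 : Tendsto (fun a => AA a 0) atTop (nhds (Real.log (4 / 2))) :=
    tendsto_AA 0 2 (by norm_num) hge0 rr_tendsto_0
  have hp2 : Tendsto (fun a => AA a 2) atTop (nhds (Real.log (4 / 1))) :=
    tendsto_AA 2 1 le_rfl hgep2 rr_tendsto_p2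
  have hF : Tendsto (fun a : ℝ => (1/4 : ℝ) * (AA a (-2) + 2 * AA a 0 + AA a 2)) atTop
      (nhds ((1/4 : ℝ) * (Real.log (4 / 1) + 2 * Real.log (4 / 2) + Real.log (4 / 1)))) :=
    ((hm2.add (h0.const_mul 2)).add hp2).const_mul (1/4)
  have hcomp := hF.comp sqrt_tendsto_atTop
  have hval : (1/4 : ℝ) * (Real.log (4 / 1) + 2 * Real.log (4 / 2) + Real.log (4 / 1))
      = (3 / 2) * Real.log 2 := by
    norm_num
    rw [show (4:ℝ) = 2 ^ 2 by norm_num, Real.log_pow]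
    push_cast
    ring
  rw [← hval]
  have hfun : I = (fun a : ℝ => (1/4 : ℝ) * (AA a (-2) + 2 * AA a 0 + AA a 2)) ∘ Real.sqrt := by
    funext snr
    exact hIeq snr
  rw [hfun]
  exact hcomp
end

section
/- Let k ≥ 1, let q₁,…,q_k be positive reals summing to 1, let μ₁,…,μ_k ∈ ℝ, let σ > 0, let φ_i(y) = (1/(σ√(2π)))·exp(−(y−μ_i)²/(2σ²)), and let p(y) = Σ_j q_j·φ_j(y). Then for each i, ∫_ℝ (1 + log p(y))·φ_i′(y) dy = −∫_ℝ (φ_i(y)/p(y))·p′(y) dy, and both integrals are finite. -/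
open MeasureTheory Finset Filter

private lemma aux_intpow {b : ℝ} (hb : 0 < b) (n : ℕ) :
    Integrable (fun y : ℝ => |y| ^ n * Real.exp (-b * y ^ 2)) := by
  have h : Integrable (fun x : ℝ => x ^ n * Real.exp (-b * x ^ 2)) := by
    have h := integrable_rpow_mul_exp_neg_mul_sq hb
        (s := (n : ℝ)) (lt_of_lt_of_le (by norm_num) (Nat.cast_nonneg n))
    simpa [Real.rpow_natCast] using h
  have h2 := h.abs
  refine h2.congr (Filter.Eventually.of_forall fun y => ?_)
  simp [abs_mul, abs_pow, Real.abs_exp]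

private lemma aux_comb {b : ℝ} (hb : 0 < b) (c0 c1 c2 c3 : ℝ) :
    Integrable (fun y : ℝ =>
      (c0 + c1 * |y| + c2 * y ^ 2 + c3 * |y| ^ 3) * Real.exp (-b * y ^ 2)) := by
  have h := aux_intpow hb
  have h' := (((h 0).const_mul c0).add ((h 1).const_mul c1)).add
      (((h 2).const_mul c2).add ((h 3).const_mul c3))
  refine h'.congr (Filter.Eventually.of_forall fun y => ?_)
  simp only [Pi.add_apply, pow_zero, pow_one]
  rw [← sq_abs y]
  ring

private lemma aux_tendsto {b : ℝ} (hb : 0 < b) (c0 c1 : ℝ) {l : Filter ℝ}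
    (hl : Tendsto (fun y : ℝ => y ^ 2) l atTop) :
    Tendsto (fun y : ℝ => (c0 + c1 * y ^ 2) * Real.exp (-b * y ^ 2)) l (nhds 0) := by
  have h1 : Tendsto (fun y : ℝ => b * y ^ 2) l atTop := hl.const_mul_atTop hb
  have he : Tendsto (fun y : ℝ => Real.exp (-(b * y ^ 2))) l (nhds 0) :=
    Real.tendsto_exp_atBot.comp (tendsto_neg_atTop_atBot.comp h1)
  have h2 : Tendsto (fun y : ℝ => (b * y ^ 2) * Real.exp (-(b * y ^ 2))) l (nhds 0) := by
    have := (Real.tendsto_pow_mul_exp_neg_atTop_nhds_zero 1).comp h1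
    simpa [Function.comp_def] using this
  have := (he.const_mul c0).add (h2.const_mul (c1 / b))
  simp only [mul_zero, add_zero] at this
  refine this.congr fun y => ?_
  field_simp

/-- Integration-by-parts identity from the paper's Appendix A (steps (71)–(73)): for a finite
Gaussian mixture `p = Σ q_j φ_j` with common variance, for each component `i`,
`∫ (1 + log p(y))·φ_i′(y) dy = −∫ (φ_i(y)/p(y))·p′(y) dy`, and both integrals are finite. -/
theorem stmt_16 (k : ℕ) (hk : 1 ≤ k)
    (q : Fin k → ℝ) (hqpos : ∀ i, 0 < q i) (hqsum : ∑ i, q i = 1)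
    (μ : Fin k → ℝ) (σ : ℝ) (hσ : 0 < σ)
    (φf : Fin k → ℝ → ℝ)
    (hφf : φf = fun i y => (1 / (σ * Real.sqrt (2 * Real.pi))) *
        Real.exp (-(y - μ i) ^ 2 / (2 * σ ^ 2)))
    (p : ℝ → ℝ) (hp : p = fun y => ∑ j, q j * φf j y) :
    ∀ i : Fin k,
      Integrable (fun y : ℝ => (1 + Real.log (p y)) * deriv (φf i) y) ∧
      Integrable (fun y : ℝ => (φf i y / p y) * deriv p y) ∧
      (∫ y : ℝ, (1 + Real.log (p y)) * deriv (φf i) y)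
        = -∫ y : ℝ, (φf i y / p y) * deriv p y := by
  intro i
  obtain ⟨c, hcdef⟩ : ∃ c : ℝ, c = 1 / (σ * Real.sqrt (2 * Real.pi)) := ⟨_, rfl⟩
  have hπ : 0 < Real.sqrt (2 * Real.pi) := Real.sqrt_pos.2 (by positivity)
  have hc : 0 < c := by rw [hcdef]; positivity
  have hσ2 : (0 : ℝ) < σ ^ 2 := by positivity
  have hφa : ∀ j y, φf j y = c * Real.exp (-(y - μ j) ^ 2 / (2 * σ ^ 2)) := by
    intro j y; rw [hφf, hcdef]
  have hφpos : ∀ j y, 0 < φf j y := fun j y => by rw [hφa]; positivity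
  have hφle : ∀ j y, φf j y ≤ c := by
    intro j y
    rw [hφa]
    calc c * Real.exp (-(y - μ j) ^ 2 / (2 * σ ^ 2)) ≤ c * 1 := by
          refine mul_le_mul_of_nonneg_left ?_ hc.le
          refine Real.exp_le_one_iff.2 ?_
          exact div_nonpos_of_nonpos_of_nonneg (neg_nonpos.2 (sq_nonneg _)) (by positivity)
      _ = c := mul_one c
  have hppos : ∀ y, 0 < p y := fun y => by
    rw [hp]
    exact Finset.sum_pos (fun j _ => mul_pos (hqpos j) (hφpos j y)) ⟨⟨0, hk⟩, Finset.mem_univ _⟩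
  have hple : ∀ y, p y ≤ c := by
    intro y
    rw [hp]
    calc ∑ j, q j * φf j y ≤ ∑ j, q j * c :=
          Finset.sum_le_sum fun j _ => mul_le_mul_of_nonneg_left (hφle j y) (hqpos j).le
      _ = c := by rw [← Finset.sum_mul, hqsum, one_mul]
  have hpge : ∀ y, q i * φf i y ≤ p y := fun y => by
    rw [hp]
    exact Finset.single_le_sum (fun j _ => (mul_pos (hqpos j) (hφpos j y)).le) (Finset.mem_univ i)
  -- derivatives
  have hderφ : ∀ j y, HasDerivAt (φf j) (-(y - μ j) / σ ^ 2 * φf j y) y := by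
    intro j y
    have h1 : HasDerivAt (fun y : ℝ => -(y - μ j) ^ 2 / (2 * σ ^ 2)) (-(y - μ j) / σ ^ 2) y := by
      have h0 : HasDerivAt (fun y : ℝ => y - μ j) 1 y := (hasDerivAt_id y).sub_const _
      have h2 := (h0.pow 2).neg.div_const (2 * σ ^ 2)
      refine h2.congr_deriv ?_
      field_simp
      ring
    have h4 : HasDerivAt (fun y : ℝ => c * Real.exp (-(y - μ j) ^ 2 / (2 * σ ^ 2)))
        (c * (Real.exp (-(y - μ j) ^ 2 / (2 * σ ^ 2)) * (-(y - μ j) / σ ^ 2))) y :=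
      (h1.exp).const_mul c
    have hfun : φf j = fun y : ℝ => c * Real.exp (-(y - μ j) ^ 2 / (2 * σ ^ 2)) :=
      funext fun y => hφa j y
    rw [hfun]
    convert h4 using 1
    simp only []
    ring
  have hderp : ∀ y, HasDerivAt p (∑ j, q j * (-(y - μ j) / σ ^ 2 * φf j y)) y := by
    intro y
    rw [hp]
    exact HasDerivAt.fun_sum fun j _ => (hderφ j y).const_mul (q j)
  have hdφ : deriv (φf i) = fun y => -(y - μ i) / σ ^ 2 * φf i y :=
    funext fun y => (hderφ i y).deriv
  have hdp : deriv p = fun y => ∑ j, q j * (-(y - μ j) / σ ^ 2 * φf j y) :=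
    funext fun y => (hderp y).deriv
  -- continuity
  have hφcont : ∀ j, Continuous (φf j) := by
    intro j
    have : Continuous fun y : ℝ => c * Real.exp (-(y - μ j) ^ 2 / (2 * σ ^ 2)) := by fun_prop
    have hfun : φf j = fun y : ℝ => c * Real.exp (-(y - μ j) ^ 2 / (2 * σ ^ 2)) :=
      funext fun y => hφa j y
    rw [hfun]; exact this
  have hpcont : Continuous p := by
    rw [hp]; exact continuous_finset_sum _ fun j _ => continuous_const.mul (hφcont j)
  have hlogcont : Continuous fun y => Real.log (p y) := by
    rw [continuous_iff_continuousAt]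
    intro y
    exact (Real.continuousAt_log (hppos y).ne').comp hpcont.continuousAt
  -- constants
  obtain ⟨A, hAdef⟩ : ∃ A : ℝ, A = 1 + |Real.log c| + |Real.log (q i * c)| + (μ i) ^ 2 / σ ^ 2 :=
    ⟨_, rfl⟩
  obtain ⟨K, hKdef⟩ : ∃ K : ℝ, K = c * Real.exp ((μ i) ^ 2 / (2 * σ ^ 2)) := ⟨_, rfl⟩
  obtain ⟨M', hM'def⟩ : ∃ M' : ℝ, M' = ∑ j, |μ j| := ⟨_, rfl⟩
  have hA : 0 < A := by rw [hAdef]; positivity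
  have hK : 0 < K := by rw [hKdef]; positivity
  have hM' : 0 ≤ M' := by rw [hM'def]; exact Finset.sum_nonneg fun j _ => abs_nonneg _
  have hb : (0 : ℝ) < 1 / (4 * σ ^ 2) := by positivity
  have hμM' : ∀ j, |μ j| ≤ M' := by
    intro j; rw [hM'def]
    exact Finset.single_le_sum (fun j _ => abs_nonneg (μ j)) (Finset.mem_univ j)
  -- gaussian upper bound
  have hgauss : ∀ y, φf i y ≤ K * Real.exp (-(1 / (4 * σ ^ 2)) * y ^ 2) := by
    intro y
    have key : -(y - μ i) ^ 2 / (2 * σ ^ 2) ≤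
        (μ i) ^ 2 / (2 * σ ^ 2) + (-(1 / (4 * σ ^ 2)) * y ^ 2) := by
      rw [div_le_iff₀ (by positivity : (0 : ℝ) < 2 * σ ^ 2)]
      have expand : ((μ i) ^ 2 / (2 * σ ^ 2) + (-(1 / (4 * σ ^ 2)) * y ^ 2)) * (2 * σ ^ 2)
          = (μ i) ^ 2 - y ^ 2 / 2 := by field_simp; ring
      rw [expand]
      nlinarith [sq_nonneg (y - 2 * μ i)]
    calc φf i y = c * Real.exp (-(y - μ i) ^ 2 / (2 * σ ^ 2)) := hφa i y
      _ ≤ c * Real.exp ((μ i) ^ 2 / (2 * σ ^ 2) + (-(1 / (4 * σ ^ 2)) * y ^ 2)) :=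
          mul_le_mul_of_nonneg_left (Real.exp_le_exp.2 key) hc.le
      _ = K * Real.exp (-(1 / (4 * σ ^ 2)) * y ^ 2) := by rw [Real.exp_add, hKdef]; ring
  -- log bounds
  have hlogup : ∀ y, Real.log (p y) ≤ Real.log c := fun y =>
    Real.log_le_log (hppos y) (hple y)
  have hlogdown : ∀ y, Real.log (q i * c) - (y ^ 2 + (μ i) ^ 2) / σ ^ 2 ≤ Real.log (p y) := by
    intro y
    have hexp : -(y ^ 2 + (μ i) ^ 2) / σ ^ 2 ≤ -(y - μ i) ^ 2 / (2 * σ ^ 2) := by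
      rw [div_le_div_iff₀ (by positivity) (by positivity)]
      nlinarith [sq_nonneg (y + μ i)]
    have h1 : q i * c * Real.exp (-(y ^ 2 + (μ i) ^ 2) / σ ^ 2) ≤ p y := by
      refine le_trans ?_ (hpge y)
      rw [hφa, mul_assoc]
      exact mul_le_mul_of_nonneg_left
        (mul_le_mul_of_nonneg_left (Real.exp_le_exp.2 hexp) hc.le) (hqpos i).le
    have h2 := Real.log_le_log (mul_pos (mul_pos (hqpos i) hc) (Real.exp_pos _)) h1
    rwa [Real.log_mul (mul_pos (hqpos i) hc).ne' (Real.exp_pos _).ne', Real.log_exp, neg_div,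
      ← sub_eq_add_neg] at h2
  have habs : ∀ y, |1 + Real.log (p y)| ≤ A + y ^ 2 / σ ^ 2 := by
    intro y
    have h1 := hlogup y
    have h2 := hlogdown y
    have h3 : Real.log c ≤ |Real.log c| := le_abs_self _
    have h4 : -|Real.log (q i * c)| ≤ Real.log (q i * c) := neg_abs_le _
    have h5 : (y ^ 2 + (μ i) ^ 2) / σ ^ 2 = y ^ 2 / σ ^ 2 + (μ i) ^ 2 / σ ^ 2 := by ring
    have h6 : (0 : ℝ) ≤ y ^ 2 / σ ^ 2 := by positivity
    have h7 : (0 : ℝ) ≤ (μ i) ^ 2 / σ ^ 2 := by positivity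
    have h8 : (0 : ℝ) ≤ |Real.log (q i * c)| := abs_nonneg _
    have h9 : (0 : ℝ) ≤ |Real.log c| := abs_nonneg _
    have h10 : Real.log (q i * c) - (y ^ 2 / σ ^ 2 + (μ i) ^ 2 / σ ^ 2) ≤ Real.log (p y) := by
      rw [← h5]; exact h2
    rw [abs_le, hAdef]
    exact ⟨by linarith, by linarith⟩
  -- integrability of the two integrands
  have hbound1 : ∀ y : ℝ,
      ‖(1 + Real.log (p y)) * (-(y - μ i) / σ ^ 2 * φf i y)‖ ≤
        (K * A * |μ i| / σ ^ 2 + K * A / σ ^ 2 * |y| + K * |μ i| / σ ^ 4 * y ^ 2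
          + K / σ ^ 4 * |y| ^ 3) * Real.exp (-(1 / (4 * σ ^ 2)) * y ^ 2) := by
    intro y
    rw [Real.norm_eq_abs, abs_mul, abs_mul]
    have hd : |(-(y - μ i) / σ ^ 2)| ≤ (|y| + |μ i|) / σ ^ 2 := by
      rw [abs_div, abs_neg, abs_of_pos hσ2]
      gcongr
      exact abs_sub y (μ i)
    have hφ' : |φf i y| ≤ K * Real.exp (-(1 / (4 * σ ^ 2)) * y ^ 2) := by
      rw [abs_of_pos (hφpos i y)]; exact hgauss y
    calc |1 + Real.log (p y)| * (|(-(y - μ i) / σ ^ 2)| * |φf i y|)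
        ≤ (A + y ^ 2 / σ ^ 2) * (((|y| + |μ i|) / σ ^ 2) *
            (K * Real.exp (-(1 / (4 * σ ^ 2)) * y ^ 2))) := by
          gcongr
          exact habs y
      _ = (K * A * |μ i| / σ ^ 2 + K * A / σ ^ 2 * |y| + K * |μ i| / σ ^ 4 * y ^ 2
          + K / σ ^ 4 * |y| ^ 3) * Real.exp (-(1 / (4 * σ ^ 2)) * y ^ 2) := by
          rw [← sq_abs y]
          ring
  have hI1 : Integrable (fun y : ℝ => (1 + Real.log (p y)) * (-(y - μ i) / σ ^ 2 * φf i y)) := by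
    have hint := aux_comb hb (K * A * |μ i| / σ ^ 2) (K * A / σ ^ 2) (K * |μ i| / σ ^ 4)
        (K / σ ^ 4)
    refine hint.mono' ?_ (Filter.Eventually.of_forall hbound1)
    exact ((continuous_const.add hlogcont).mul
      ((by fun_prop : Continuous fun y : ℝ => -(y - μ i) / σ ^ 2).mul
        (hφcont i))).aestronglyMeasurable
  have hbound2 : ∀ y : ℝ,
      ‖φf i y / p y * (∑ j, q j * (-(y - μ j) / σ ^ 2 * φf j y))‖ ≤
        (K * M' / σ ^ 2 + K / σ ^ 2 * |y| + 0 * y ^ 2 + 0 * |y| ^ 3) *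
          Real.exp (-(1 / (4 * σ ^ 2)) * y ^ 2) := by
    intro y
    rw [Real.norm_eq_abs, abs_mul]
    have hp' : |∑ j, q j * (-(y - μ j) / σ ^ 2 * φf j y)| ≤ (|y| + M') / σ ^ 2 * p y := by
      calc |∑ j, q j * (-(y - μ j) / σ ^ 2 * φf j y)|
          ≤ ∑ j, |q j * (-(y - μ j) / σ ^ 2 * φf j y)| := Finset.abs_sum_le_sum_abs _ _
        _ ≤ ∑ j, q j * ((|y| + M') / σ ^ 2 * φf j y) := by
            refine Finset.sum_le_sum fun j _ => ?_
            rw [abs_mul, abs_of_pos (hqpos j), abs_mul, abs_of_pos (hφpos j y)]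
            refine mul_le_mul_of_nonneg_left (mul_le_mul_of_nonneg_right ?_ (hφpos j y).le)
              (hqpos j).le
            rw [abs_div, abs_neg, abs_of_pos hσ2]
            gcongr
            exact (abs_sub y (μ j)).trans (by linarith [hμM' j])
        _ = (|y| + M') / σ ^ 2 * p y := by
            rw [hp, Finset.mul_sum]
            exact Finset.sum_congr rfl fun j _ => by ring
    have habsdiv : |φf i y / p y| = φf i y / p y := abs_of_pos (div_pos (hφpos i y) (hppos y))
    rw [habsdiv]
    calc φf i y / p y * |∑ j, q j * (-(y - μ j) / σ ^ 2 * φf j y)|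
        ≤ φf i y / p y * ((|y| + M') / σ ^ 2 * p y) := by
          exact mul_le_mul_of_nonneg_left hp' (div_pos (hφpos i y) (hppos y)).le
      _ = φf i y * ((|y| + M') / σ ^ 2) := by
          have h0 : p y ≠ 0 := (hppos y).ne'
          field_simp
          try ring
      _ ≤ K * Real.exp (-(1 / (4 * σ ^ 2)) * y ^ 2) * ((|y| + M') / σ ^ 2) := by
          refine mul_le_mul_of_nonneg_right (hgauss y) (by positivity)
      _ = (K * M' / σ ^ 2 + K / σ ^ 2 * |y| + 0 * y ^ 2 + 0 * |y| ^ 3) *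
            Real.exp (-(1 / (4 * σ ^ 2)) * y ^ 2) := by ring
  have hI2 : Integrable (fun y : ℝ =>
      φf i y / p y * (∑ j, q j * (-(y - μ j) / σ ^ 2 * φf j y))) := by
    have hint := aux_comb hb (K * M' / σ ^ 2) (K / σ ^ 2) 0 0
    refine hint.mono' ?_ (Filter.Eventually.of_forall hbound2)
    refine Continuous.aestronglyMeasurable ?_
    refine ((hφcont i).div hpcont fun y => (hppos y).ne').mul ?_
    exact continuous_finset_sum _ fun j _ =>
      continuous_const.mul ((by fun_prop : Continuous fun y : ℝ => -(y - μ j) / σ ^ 2).mul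
        (hφcont j))
  -- the function F and its derivative
  have hF : ∀ y, HasDerivAt (fun y => φf i y * (1 + Real.log (p y)))
      ((1 + Real.log (p y)) * (-(y - μ i) / σ ^ 2 * φf i y)
        + φf i y / p y * (∑ j, q j * (-(y - μ j) / σ ^ 2 * φf j y))) y := by
    intro y
    have h1 : HasDerivAt (fun y => 1 + Real.log (p y))
        ((∑ j, q j * (-(y - μ j) / σ ^ 2 * φf j y)) / p y) y :=
      ((hderp y).log (hppos y).ne').const_add 1
    have h2 := (hderφ i y).mul h1
    refine h2.congr_deriv ?_
    ring
  -- boundary behaviour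
  have hFabs : ∀ y, ‖φf i y * (1 + Real.log (p y))‖ ≤
      (K * A + K / σ ^ 2 * y ^ 2) * Real.exp (-(1 / (4 * σ ^ 2)) * y ^ 2) := by
    intro y
    rw [Real.norm_eq_abs, abs_mul, abs_of_pos (hφpos i y)]
    calc φf i y * |1 + Real.log (p y)|
        ≤ K * Real.exp (-(1 / (4 * σ ^ 2)) * y ^ 2) * (A + y ^ 2 / σ ^ 2) :=
          mul_le_mul (hgauss y) (habs y) (abs_nonneg _) (by positivity)
      _ = (K * A + K / σ ^ 2 * y ^ 2) * Real.exp (-(1 / (4 * σ ^ 2)) * y ^ 2) := by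
          ring
  have hsqtop : Tendsto (fun y : ℝ => y ^ 2) atTop atTop := tendsto_pow_atTop two_ne_zero
  have hsqbot : Tendsto (fun y : ℝ => y ^ 2) atBot atTop := by
    have hneg : Tendsto (fun y : ℝ => -y) atBot atTop := tendsto_neg_atBot_atTop
    have := hsqtop.comp hneg
    simpa [Function.comp_def, neg_sq] using this
  have htop : Tendsto (fun y => φf i y * (1 + Real.log (p y))) atTop (nhds 0) :=
    squeeze_zero_norm hFabs (aux_tendsto hb (K * A) (K / σ ^ 2) hsqtop)
  have hbot : Tendsto (fun y => φf i y * (1 + Real.log (p y))) atBot (nhds 0) :=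
    squeeze_zero_norm hFabs (aux_tendsto hb (K * A) (K / σ ^ 2) hsqbot)
  -- FTC on both half-lines
  have hI : Integrable (fun y : ℝ =>
      (1 + Real.log (p y)) * (-(y - μ i) / σ ^ 2 * φf i y)
        + φf i y / p y * (∑ j, q j * (-(y - μ j) / σ ^ 2 * φf j y))) := hI1.add hI2
  have h1 := integral_Ioi_of_hasDerivAt_of_tendsto' (a := 0) (fun x _ => hF x)
    hI.integrableOn htop
  have h2 := integral_Iic_of_hasDerivAt_of_tendsto' (a := 0) (fun x _ => hF x)
    hI.integrableOn hbot
  have h3 : (∫ y : ℝ, ((1 + Real.log (p y)) * (-(y - μ i) / σ ^ 2 * φf i y)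
      + φf i y / p y * (∑ j, q j * (-(y - μ j) / σ ^ 2 * φf j y)))) = 0 := by
    rw [← intervalIntegral.integral_Iic_add_Ioi (b := (0 : ℝ)) hI.integrableOn hI.integrableOn, h1, h2]
    ring
  have h4 : (∫ y : ℝ, (1 + Real.log (p y)) * (-(y - μ i) / σ ^ 2 * φf i y))
      + (∫ y : ℝ, φf i y / p y * (∑ j, q j * (-(y - μ j) / σ ^ 2 * φf j y))) = 0 := by
    rw [← integral_add hI1 hI2]
    exact h3
  simp only [hdφ, hdp]
  exact ⟨hI1, hI2, by linarith⟩
end
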